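/- arXiv:0912.3381 — 5 statements merged into one kernel-verified Lean document; each statement's English description precedes it below -/
import Mathlib

section
/- Let (X, 𝒳, μ) be a probability space, k ≥ 1 an integer, and 𝒳₁, 𝒳₂, …, 𝒳ₖ sub-σ-algebras of 𝒳. Then for every bounded non-negative measurable function f on X, ∫ f · ∏_{i=1}^{k} E(f | 𝒳ᵢ) dμ ≥ (∫ f dμ)^{k+1}. -/
open MeasureTheory Real Filter Topology

theorem core_lemma {X : Type*} [mX : MeasurableSpace X] (μ : Measure X) [IsProbabilityMeasure μ]
    (k : ℕ) (m : Fin k → MeasurableSpace X) (hm : ∀ i, m i ≤ mX)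
    (F : X → ℝ) (hF : Measurable F) (ε C : ℝ) (hε : 0 < ε)
    (hFl : ∀ x, ε ≤ F x) (hFu : ∀ x, F x ≤ C) :
    (∫ x, F x ∂μ) ^ (k + 1) ≤ ∫ x, F x * ∏ i, (μ[F|m i]) x ∂μ := by
  have hne : Nonempty X := by
    by_contra h
    rw [not_nonempty_iff] at h
    have h1 : (1 : ENNReal) = 0 := by
      rw [← measure_univ (μ := μ), Set.univ_eq_empty_iff.mpr h, measure_empty]
    simp at h1
  have hεC : ε ≤ C := (hFl (Classical.choice hne)).trans (hFu _)
  have hC : 0 < C := hε.trans_le hεC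
  -- integrability of F
  have hFint : Integrable F μ := by
    refine (integrable_const C).mono' hF.aestronglyMeasurable (ae_of_all _ fun x => ?_)
    rw [Real.norm_eq_abs, abs_of_nonneg (hε.le.trans (hFl x))]
    exact hFu x
  set I : ℝ := ∫ x, F x ∂μ with hI_def
  have hIl : ε ≤ I := by
    calc ε = ∫ _x, ε ∂μ := by simp
    _ ≤ I := integral_mono (integrable_const ε) hFint hFl
  have hIu : I ≤ C := by
    calc I ≤ ∫ _x, C ∂μ := integral_mono hFint (integrable_const C) hFu
    _ = C := by simp
  have hI : 0 < I := hε.trans_le hIl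
  set g : Fin k → X → ℝ := fun i => μ[F|m i] with hg_def
  have hgsm : ∀ i, StronglyMeasurable[m i] (g i) := fun i => stronglyMeasurable_condExp
  have hgmeas : ∀ i, Measurable (g i) := fun i => ((hgsm i).mono (hm i)).measurable
  have hgint : ∀ i, Integrable (g i) μ := fun i => integrable_condExp
  have hgl : ∀ i, ∀ᵐ x ∂μ, ε ≤ g i x := by
    intro i
    have h2 := condExp_mono (m := m i) (integrable_const ε) hFint (ae_of_all _ hFl)
    rw [condExp_const (hm i)] at h2
    exact h2
  have hgu : ∀ i, ∀ᵐ x ∂μ, g i x ≤ C := by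
    intro i
    have h2 := condExp_mono (m := m i) hFint (integrable_const C) (ae_of_all _ hFu)
    rw [condExp_const (hm i)] at h2
    exact h2
  have hgI : ∀ i, ∫ x, g i x ∂μ = I := fun i => integral_condExp (hm i)
  -- the "entropy" functions
  set h : Fin k → X → ℝ := fun i x => Real.log (g i x) - Real.log I with hh_def
  have hhsm : ∀ i, StronglyMeasurable[m i] (h i) :=
    fun i => ((hgsm i).measurable.log.sub measurable_const).stronglyMeasurable
  set B : ℝ := max |Real.log ε| |Real.log C| + |Real.log I| with hB_def
  have hB : ∀ i, ∀ᵐ x ∂μ, ‖h i x‖ ≤ B := by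
    intro i
    filter_upwards [hgl i, hgu i] with x hx1 hx2
    have h1 : Real.log ε ≤ Real.log (g i x) := Real.log_le_log hε hx1
    have h2 : Real.log (g i x) ≤ Real.log C := Real.log_le_log (hε.trans_le hx1) hx2
    have h3 : |Real.log (g i x)| ≤ max |Real.log ε| |Real.log C| := by
      rw [abs_le]
      constructor
      · have h4 := neg_abs_le (Real.log ε)
        have h5 : -(max |Real.log ε| |Real.log C|) ≤ -|Real.log ε| :=
          neg_le_neg (le_max_left _ _)
        linarith
      · exact h2.trans ((le_abs_self _).trans (le_max_right _ _))
    calc ‖h i x‖ = |Real.log (g i x) - Real.log I| := Real.norm_eq_abs _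
      _ ≤ |Real.log (g i x)| + |Real.log I| := abs_sub (Real.log (g i x)) (Real.log I)
      _ ≤ B := by rw [hB_def]; gcongr
  -- step A : swap via conditional expectation and tangent line of x log x
  have hswap : ∀ i, ∫ x, F x * h i x ∂μ = ∫ x, h i x * g i x ∂μ := by
    intro i
    have hpull := condExp_stronglyMeasurable_mul_of_bound (hm i) (hhsm i) hFint B (hB i)
    calc ∫ x, F x * h i x ∂μ = ∫ x, (h i * F) x ∂μ := by
          simp_rw [Pi.mul_apply]; congr 1; ext x; rw [mul_comm]
      _ = ∫ x, (μ[h i * F|m i]) x ∂μ := (integral_condExp (hm i)).symm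
      _ = ∫ x, h i x * g i x ∂μ := integral_congr_ae (by
            filter_upwards [hpull] with x hx
            rw [hx]; rfl)
  have hhint : ∀ i, Integrable (fun x => h i x * g i x) μ :=
    fun i => (hgint i).bdd_mul ((hhsm i).mono (hm i)).aestronglyMeasurable (hB i)
  have hA : ∀ i, 0 ≤ ∫ x, F x * h i x ∂μ := by
    intro i
    rw [hswap i]
    have h0 : ∫ x, (g i x - I) ∂μ = 0 := by
      rw [integral_sub (hgint i) (integrable_const I), hgI i]; simp
    rw [← h0]
    refine integral_mono_ae ((hgint i).sub (integrable_const I)) (hhint i) ?_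
    filter_upwards [hgl i] with x hx
    have hgx : 0 < g i x := hε.trans_le hx
    have h1 : Real.log (I / g i x) ≤ I / g i x - 1 := Real.log_le_sub_one_of_pos (by positivity)
    rw [Real.log_div hI.ne' hgx.ne'] at h1
    have h2 := mul_le_mul_of_nonneg_left h1 hgx.le
    have h3 : g i x * (I / g i x - 1) = I - g i x := by field_simp
    have : h i x * g i x = (Real.log (g i x) - Real.log I) * g i x := rfl
    nlinarith [h2, h3]
  -- step B : pointwise convexity of exp
  have hB2 : ∀ᵐ x ∂μ, I ^ k * (F x + ∑ i, F x * h i x) ≤ F x * ∏ i, g i x := by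
    filter_upwards [ae_all_iff.2 hgl] with x hx
    have hFx : 0 < F x := hε.trans_le (hFl x)
    have hprod : ∏ i, g i x = Real.exp (∑ i, Real.log (g i x)) := by
      rw [Real.exp_sum]
      exact Finset.prod_congr rfl fun i _ => (Real.exp_log (hε.trans_le (hx i))).symm
    have hexp : Real.exp ((k : ℝ) * Real.log I) *
        (1 + (∑ i, Real.log (g i x) - (k : ℝ) * Real.log I))
        ≤ Real.exp (∑ i, Real.log (g i x)) := by
      have he := Real.add_one_le_exp (∑ i, Real.log (g i x) - (k : ℝ) * Real.log I)
      calc Real.exp ((k : ℝ) * Real.log I) *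
            (1 + (∑ i, Real.log (g i x) - (k : ℝ) * Real.log I))
          ≤ Real.exp ((k : ℝ) * Real.log I) *
            Real.exp (∑ i, Real.log (g i x) - (k : ℝ) * Real.log I) := by
            apply mul_le_mul_of_nonneg_left (by linarith) (Real.exp_nonneg _)
        _ = Real.exp (∑ i, Real.log (g i x)) := by rw [← Real.exp_add]; ring_nf
    have hIk : Real.exp ((k : ℝ) * Real.log I) = I ^ k := by
      rw [Real.exp_nat_mul, Real.exp_log hI]
    have hsum : ∑ i, h i x = ∑ i, Real.log (g i x) - (k : ℝ) * Real.log I := by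
      rw [hh_def]
      rw [Finset.sum_sub_distrib, Finset.sum_const, Finset.card_univ, Fintype.card_fin,
        nsmul_eq_mul]
    calc I ^ k * (F x + ∑ i, F x * h i x) = F x * (I ^ k * (1 + ∑ i, h i x)) := by
          rw [← Finset.mul_sum]; ring
      _ ≤ F x * ∏ i, g i x := by
          apply mul_le_mul_of_nonneg_left _ hFx.le
          rw [hprod, ← hIk, hsum]
          exact hexp
  -- integrability
  have hFgint : Integrable (fun x => F x * ∏ i, g i x) μ := by
    refine (integrable_const (C * C ^ k)).mono'
      (hF.mul (Finset.measurable_prod _ fun i _ => hgmeas i)).aestronglyMeasurable ?_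
    filter_upwards [ae_all_iff.2 hgl, ae_all_iff.2 hgu] with x hx1 hx2
    have hp0 : 0 ≤ ∏ i, g i x := Finset.prod_nonneg fun i _ => hε.le.trans (hx1 i)
    rw [Real.norm_eq_abs, abs_of_nonneg (mul_nonneg (hε.le.trans (hFl x)) hp0)]
    have hpC : ∏ i, g i x ≤ C ^ k := by
      calc ∏ i, g i x ≤ ∏ _i : Fin k, C := Finset.prod_le_prod
            (fun i _ => hε.le.trans (hx1 i)) (fun i _ => hx2 i)
        _ = C ^ k := by simp
    exact mul_le_mul (hFu x) hpC hp0 hC.le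
  have hFhint : ∀ i, Integrable (fun x => F x * h i x) μ := fun i =>
    (hFint.bdd_mul ((hhsm i).mono (hm i)).aestronglyMeasurable (hB i)).congr
      (ae_of_all _ fun x => mul_comm _ _)
  -- conclusion
  calc I ^ (k + 1) = I ^ k * I := by ring
    _ ≤ I ^ k * (I + ∑ i, ∫ x, F x * h i x ∂μ) := by
        have h1 : (0:ℝ) ≤ ∑ i, ∫ x, F x * h i x ∂μ := Finset.sum_nonneg fun i _ => hA i
        have hIk0 : (0:ℝ) ≤ I ^ k := by positivity
        nlinarith
    _ = ∫ x, I ^ k * (F x + ∑ i, F x * h i x) ∂μ := by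
        rw [integral_const_mul, integral_add hFint
          (integrable_finset_sum _ fun i _ => hFhint i), integral_finset_sum _
          (fun i _ => hFhint i)]
    _ ≤ ∫ x, F x * ∏ i, g i x ∂μ :=
        integral_mono_ae ((hFint.add (integrable_finset_sum _ fun i _ => hFhint i)).const_mul _)
          hFgint hB2

theorem condexp_product_inequality
    {X : Type*} [mX : MeasurableSpace X] (μ : Measure X) [IsProbabilityMeasure μ]
    (k : ℕ) (hk : 1 ≤ k)
    (m : Fin k → MeasurableSpace X) (hm : ∀ i, m i ≤ mX)
    (f : X → ℝ) (hf : Measurable f) (hf0 : ∀ x, 0 ≤ f x)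
    (C : ℝ) (hfC : ∀ x, f x ≤ C) :
    ∫ x, f x * ∏ i, (μ[f|m i]) x ∂μ ≥ (∫ x, f x ∂μ) ^ (k + 1) := by
  have hne : Nonempty X := by
    by_contra h
    rw [not_nonempty_iff] at h
    have h1 : (1 : ENNReal) = 0 := by
      rw [← measure_univ (μ := μ), Set.univ_eq_empty_iff.mpr h, measure_empty]
    simp at h1
  have hC0 : 0 ≤ C := (hf0 (Classical.choice hne)).trans (hfC _)
  have hfint : Integrable f μ := by
    refine (integrable_const C).mono' hf.aestronglyMeasurable (ae_of_all _ fun x => ?_)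
    rw [Real.norm_eq_abs, abs_of_nonneg (hf0 x)]
    exact hfC x
  set I : ℝ := ∫ x, f x ∂μ with hI_def
  have hI0 : 0 ≤ I := integral_nonneg hf0
  set g : Fin k → X → ℝ := fun i => μ[f|m i] with hg_def
  have hgmeas : ∀ i, Measurable (g i) :=
    fun i => (stronglyMeasurable_condExp.mono (hm i)).measurable
  have hgl : ∀ i, ∀ᵐ x ∂μ, 0 ≤ g i x := fun i => condExp_nonneg (ae_of_all _ hf0)
  have hgu : ∀ i, ∀ᵐ x ∂μ, g i x ≤ C := by
    intro i
    have h2 := condExp_mono (m := m i) hfint (integrable_const C) (ae_of_all _ hfC)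
    rw [condExp_const (hm i)] at h2
    exact h2
  set ε : ℕ → ℝ := fun n => 1 / (n + 1) with hε_def
  have hεpos : ∀ n, 0 < ε n := fun n => by positivity
  have hεle : ∀ n, ε n ≤ 1 := fun n => by
    rw [hε_def]
    rw [div_le_one (by positivity)]
    simp
  have hmain : ∀ n, (I + ε n) ^ (k + 1) ≤ ∫ x, (f x + ε n) * ∏ i, (g i x + ε n) ∂μ := by
    intro n
    have h1 := core_lemma μ k m hm (fun x => f x + ε n) (hf.add_const _) (ε n) (C + ε n)
      (hεpos n) (fun x => by show ε n ≤ f x + ε n; linarith [hf0 x])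
      (fun x => by show f x + ε n ≤ C + ε n; linarith [hfC x])
    have hint2 : ∫ x, (f x + ε n) ∂μ = I + ε n := by
      rw [integral_add hfint (integrable_const _)]
      simp [hI_def]
    rw [hint2] at h1
    refine h1.trans_eq ?_
    apply integral_congr_ae
    have hcond : ∀ i, (μ[fun x => f x + ε n|m i]) =ᵐ[μ] fun x => g i x + ε n := by
      intro i
      have h2 := condExp_add (m := m i) hfint (integrable_const (ε n))
      rw [condExp_const (hm i)] at h2
      filter_upwards [h2] with x hx
      exact hx
    filter_upwards [ae_all_iff.2 hcond] with x hx
    rw [Finset.prod_congr rfl fun i _ => hx i]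
  have hlim : Tendsto (fun n => ∫ x, (f x + ε n) * ∏ i, (g i x + ε n) ∂μ) atTop
      (𝓝 (∫ x, f x * ∏ i, g i x ∂μ)) := by
    apply tendsto_integral_of_dominated_convergence (fun _ => (C + 1) ^ (k + 1))
    · intro n
      exact ((hf.add_const _).mul
        (Finset.measurable_prod _ fun i _ => (hgmeas i).add_const _)).aestronglyMeasurable
    · exact integrable_const _
    · intro n
      filter_upwards [ae_all_iff.2 hgl, ae_all_iff.2 hgu] with x h1 h2
      have hp0 : 0 ≤ ∏ i, (g i x + ε n) :=
        Finset.prod_nonneg fun i _ => by linarith [h1 i, hεpos n]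
      rw [Real.norm_eq_abs, abs_of_nonneg (mul_nonneg (by linarith [hf0 x, hεpos n]) hp0)]
      have hpC : ∏ i, (g i x + ε n) ≤ (C + 1) ^ k := by
        calc ∏ i, (g i x + ε n) ≤ ∏ _i : Fin k, (C + 1) := Finset.prod_le_prod
              (fun i _ => by linarith [h1 i, hεpos n])
              (fun i _ => by linarith [h2 i, hεle n])
          _ = (C + 1) ^ k := by simp
      calc (f x + ε n) * ∏ i, (g i x + ε n) ≤ (C + 1) * (C + 1) ^ k :=
            mul_le_mul (by linarith [hfC x, hεle n]) hpC hp0 (by linarith)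
        _ = (C + 1) ^ (k + 1) := by ring
    · apply ae_of_all
      intro x
      have hε0 : Tendsto ε atTop (𝓝 0) := tendsto_one_div_add_atTop_nhds_zero_nat
      have ht := ((tendsto_const_nhds : Tendsto (fun _ : ℕ => f x) atTop (𝓝 (f x))).add hε0).mul
        (tendsto_finset_prod (Finset.univ : Finset (Fin k))
          (fun i _ => (tendsto_const_nhds :
            Tendsto (fun _ : ℕ => g i x) atTop (𝓝 (g i x))).add hε0))
      simpa using ht
  have hall : ∀ n, I ^ (k + 1) ≤ ∫ x, (f x + ε n) * ∏ i, (g i x + ε n) ∂μ := fun n =>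
    (pow_le_pow_left₀ hI0 (by linarith [hεpos n]) _).trans (hmain n)
  exact ge_of_tendsto hlim (Filter.Eventually.of_forall hall)
end

section
/- Let (X, μ, T₁, T₂) be a system on a standard Borel space, let 𝒜 = ℐ(T₁) ∩ ℐ(T₂) and 𝒲 = ℐ(T₁) ∨ ℐ(T₂), and suppose x ↦ μₓ is an ergodic decomposition of μ under T₁ and T₂. Let f be a bounded measurable function on X and let f̃ be a 𝒲-measurable function with f̃ = E_μ(f | 𝒲) μ-almost everywhere. Then for μ-almost every x, one has E_{μₓ}(f | 𝒲) = f̃ μₓ-almost everywhere. -/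
open MeasureTheory Filter Set MeasurableSpace
open scoped ENNReal symmDiff Topology

/-- The σ-algebra `ℐ(T)` of `T`-invariant measurable sets. -/
def invSigma {X : Type*} [m : MeasurableSpace X] (T : X → X) : MeasurableSpace X where
  MeasurableSet' s := MeasurableSet s ∧ T ⁻¹' s = s
  measurableSet_empty := ⟨MeasurableSet.empty, rfl⟩
  measurableSet_compl s hs := ⟨hs.1.compl, by rw [Set.preimage_compl, hs.2]⟩
  measurableSet_iUnion f hf :=
    ⟨MeasurableSet.iUnion fun i => (hf i).1, by
      rw [Set.preimage_iUnion]
      exact Set.iUnion_congr fun i => (hf i).2⟩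

section BirkhoffMachinery

/-! ### `limsup` Birkhoff averages of indicator functions -/

/-- Birkhoff average of the indicator of `D` along `T`, valued in `ℝ≥0∞`. -/
noncomputable def ecXbirk {X : Type*} (T : X → X) (D : Set X) (N : ℕ) (y : X) : ℝ≥0∞ :=
  (∑ n ∈ Finset.range N, D.indicator (1 : X → ℝ≥0∞) (T^[n] y)) / N

/-- `limsup` of Birkhoff averages of the indicator of `D` along `T`. -/
noncomputable def ecXavg {X : Type*} (T : X → X) (D : Set X) (y : X) : ℝ≥0∞ :=
  limsup (fun N => ecXbirk T D N y) atTop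

-- ℝ≥0∞ limsup subadditivity
lemma ecX_limsup_add_le (u v : ℕ → ℝ≥0∞) :
    limsup (fun n => u n + v n) atTop ≤ limsup u atTop + limsup v atTop := by
  by_cases hu : limsup u atTop = ⊤
  · simp [hu]
  by_cases hv : limsup v atTop = ⊤
  · simp [hv]
  refine ENNReal.le_of_forall_pos_le_add fun ε hε _ => ?_
  have h2 : (0:ℝ≥0∞) < ε / 2 := by
    simp [ENNReal.div_pos_iff, hε.ne']
  have hu' : limsup u atTop < limsup u atTop + ε / 2 :=
    ENNReal.lt_add_right hu h2.ne'
  have hv' : limsup v atTop < limsup v atTop + ε / 2 :=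
    ENNReal.lt_add_right hv h2.ne'
  have eu := eventually_lt_of_limsup_lt hu'
  have ev := eventually_lt_of_limsup_lt hv'
  refine limsup_le_of_le (by isBoundedDefault) ?_
  filter_upwards [eu, ev] with n h1 h2'
  calc u n + v n ≤ (limsup u atTop + ε/2) + (limsup v atTop + ε/2) :=
        add_le_add h1.le h2'.le
    _ = limsup u atTop + limsup v atTop + (ε/2 + ε/2) := by ring
    _ = limsup u atTop + limsup v atTop + ε := by rw [ENNReal.add_halves]

lemma ecX_limsup_eq_of_within_inv (u v : ℕ → ℝ≥0∞)
    (h1 : ∀ᶠ N in atTop, u N ≤ v N + (N : ℝ≥0∞)⁻¹)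
    (h2 : ∀ᶠ N in atTop, v N ≤ u N + (N : ℝ≥0∞)⁻¹) :
    limsup u atTop = limsup v atTop := by
  have hz : limsup (fun N : ℕ => (N : ℝ≥0∞)⁻¹) atTop = 0 :=
    (ENNReal.tendsto_inv_nat_nhds_zero).limsup_eq
  have key : ∀ (a b : ℕ → ℝ≥0∞), (∀ᶠ N in atTop, a N ≤ b N + (N : ℝ≥0∞)⁻¹) →
      limsup a atTop ≤ limsup b atTop := by
    intro a b hab
    calc limsup a atTop ≤ limsup (fun N => b N + (N : ℝ≥0∞)⁻¹) atTop :=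
          limsup_le_limsup hab
      _ ≤ limsup b atTop + limsup (fun N : ℕ => (N : ℝ≥0∞)⁻¹) atTop :=
          ecX_limsup_add_le _ _
      _ = limsup b atTop := by rw [hz, add_zero]
  exact le_antisymm (key u v h1) (key v u h2)

variable {X : Type*}

lemma ecXbirk_le_one (T : X → X) (D : Set X) (N : ℕ) (y : X) : ecXbirk T D N y ≤ 1 := by
  calc ecXbirk T D N y ≤ (N : ℝ≥0∞) / N := by
        apply ENNReal.div_le_div_right
        calc ∑ n ∈ Finset.range N, D.indicator (1 : X → ℝ≥0∞) (T^[n] y)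
            ≤ ∑ n ∈ Finset.range N, 1 :=
              Finset.sum_le_sum fun i _ => Set.indicator_le_self' (by simp) _
          _ = N := by simp
    _ ≤ 1 := ENNReal.div_self_le_one

lemma ecXbirk_sum_shift (T : X → X) (D : Set X) (N : ℕ) (y : X) :
    (∑ n ∈ Finset.range N, D.indicator (1 : X → ℝ≥0∞) (T^[n] (T y))) + D.indicator 1 y
      = (∑ n ∈ Finset.range N, D.indicator (1 : X → ℝ≥0∞) (T^[n] y))
          + D.indicator 1 (T^[N] y) := by
  have h1 : ∑ n ∈ Finset.range (N+1), D.indicator (1 : X → ℝ≥0∞) (T^[n] y)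
      = (∑ n ∈ Finset.range N, D.indicator (1 : X → ℝ≥0∞) (T^[n] (T y)))
        + D.indicator 1 y := by
    rw [Finset.sum_range_succ']
    simp [Function.iterate_succ_apply]
  have h2 : ∑ n ∈ Finset.range (N+1), D.indicator (1 : X → ℝ≥0∞) (T^[n] y)
      = (∑ n ∈ Finset.range N, D.indicator (1 : X → ℝ≥0∞) (T^[n] y))
        + D.indicator 1 (T^[N] y) := Finset.sum_range_succ _ _
  rw [← h1, h2]

lemma ecXavg_shift (T : X → X) (D : Set X) (y : X) : ecXavg T D (T y) = ecXavg T D y := by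
  have hind : ∀ z, D.indicator (1 : X → ℝ≥0∞) z ≤ 1 := fun z =>
    Set.indicator_le_self' (by simp) _
  have main : ∀ (a b : X), (∀ N : ℕ,
        (∑ n ∈ Finset.range N, D.indicator (1 : X → ℝ≥0∞) (T^[n] a))
          ≤ (∑ n ∈ Finset.range N, D.indicator (1 : X → ℝ≥0∞) (T^[n] b)) + 1) →
      ∀ᶠ N in atTop, ecXbirk T D N a ≤ ecXbirk T D N b + (N : ℝ≥0∞)⁻¹ := by
    intro a b hab
    filter_upwards with N
    rw [ecXbirk, ecXbirk, show ((N:ℝ≥0∞))⁻¹ = 1 / N from (one_div _).symm,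
      ENNReal.div_add_div_same]
    exact ENNReal.div_le_div_right (hab N) _
  apply ecX_limsup_eq_of_within_inv
  · refine main _ _ fun N => ?_
    calc (∑ n ∈ Finset.range N, D.indicator (1 : X → ℝ≥0∞) (T^[n] (T y)))
        ≤ (∑ n ∈ Finset.range N, D.indicator (1 : X → ℝ≥0∞) (T^[n] (T y)))
            + D.indicator 1 y := le_self_add
      _ = (∑ n ∈ Finset.range N, D.indicator (1 : X → ℝ≥0∞) (T^[n] y))
            + D.indicator 1 (T^[N] y) := ecXbirk_sum_shift T D N y
      _ ≤ _ + 1 := add_le_add_right (hind _) _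
  · refine main _ _ fun N => ?_
    calc (∑ n ∈ Finset.range N, D.indicator (1 : X → ℝ≥0∞) (T^[n] y))
        ≤ (∑ n ∈ Finset.range N, D.indicator (1 : X → ℝ≥0∞) (T^[n] y))
            + D.indicator 1 (T^[N] y) := le_self_add
      _ = (∑ n ∈ Finset.range N, D.indicator (1 : X → ℝ≥0∞) (T^[n] (T y)))
            + D.indicator 1 y := (ecXbirk_sum_shift T D N y).symm
      _ ≤ _ + 1 := add_le_add_right (hind _) _

lemma ecX_iterate_preimage_eq {T : X → X} {A : Set X} (hA : T ⁻¹' A = A) (n : ℕ) :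
    T^[n] ⁻¹' A = A := by
  induction n with
  | zero => simp
  | succ n ih => rw [Function.iterate_succ, Set.preimage_comp, ih, hA]

lemma ecXbirk_invariant {T : X → X} {A : Set X} (hA : T ⁻¹' A = A) {N : ℕ} (hN : 1 ≤ N)
    (y : X) : ecXbirk T A N y = A.indicator 1 y := by
  have hmem : ∀ n : ℕ, A.indicator (1 : X → ℝ≥0∞) (T^[n] y) = A.indicator 1 y := by
    intro n
    have : T^[n] y ∈ A ↔ y ∈ A := by
      conv_rhs => rw [← ecX_iterate_preimage_eq hA n]
      exact Iff.rfl
    by_cases hy : y ∈ A <;> simp [Set.indicator, this, hy]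
  rw [ecXbirk]
  simp only [hmem, Finset.sum_const, Finset.card_range, nsmul_eq_mul]
  rw [mul_comm, mul_div_assoc,
    ENNReal.div_self (by simpa using (by omega : N ≠ 0)) (by simp), mul_one]

lemma ecXavg_invariant {T : X → X} {A : Set X} (hA : T ⁻¹' A = A) (y : X) :
    ecXavg T A y = A.indicator 1 y := by
  rw [ecXavg]
  have : (fun N => ecXbirk T A N y) =ᶠ[atTop] fun _ => A.indicator 1 y := by
    filter_upwards [eventually_ge_atTop 1] with N hN using ecXbirk_invariant hA hN y
  rw [limsup_congr this, limsup_const]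

lemma ecX_indicator_tri (D E : Set X) (z : X) :
    D.indicator (1 : X → ℝ≥0∞) z ≤ E.indicator 1 z + (D ∆ E).indicator 1 z := by
  by_cases hD : z ∈ D <;> by_cases hE : z ∈ E <;>
    simp [Set.indicator, hD, hE, Set.mem_symmDiff]

lemma ecXbirk_tri (T : X → X) (D E : Set X) (N : ℕ) (y : X) :
    ecXbirk T D N y ≤ ecXbirk T E N y + ecXbirk T (D ∆ E) N y := by
  rw [ecXbirk, ecXbirk, ecXbirk, ENNReal.div_add_div_same]
  apply ENNReal.div_le_div_right
  rw [← Finset.sum_add_distrib]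
  exact Finset.sum_le_sum fun n _ => ecX_indicator_tri D E _

lemma ecXavg_tri (T : X → X) (D E : Set X) (y : X) :
    ecXavg T D y ≤ ecXavg T E y + ecXavg T (D ∆ E) y := by
  calc ecXavg T D y ≤ limsup (fun N => ecXbirk T E N y + ecXbirk T (D ∆ E) N y) atTop :=
        limsup_le_limsup (Eventually.of_forall fun N => ecXbirk_tri T D E N y)
    _ ≤ _ := ecX_limsup_add_le _ _

variable [mX : MeasurableSpace X]

lemma ecX_measurable_birk {T : X → X} (hT : Measurable T) {D : Set X} (hD : MeasurableSet D)
    (N : ℕ) : Measurable (ecXbirk T D N) := by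
  apply Measurable.div _ measurable_const
  exact Finset.measurable_sum _ fun n _ =>
    ((measurable_one.indicator hD)).comp (hT.iterate n)

lemma ecX_measurable_avg {T : X → X} (hT : Measurable T) {D : Set X} (hD : MeasurableSet D) :
    Measurable (ecXavg T D) :=
  Measurable.limsup fun N => ecX_measurable_birk hT hD N

/-- Hopf-type maximal inequality for the `limsup` Birkhoff average of an indicator. -/
lemma ecX_maximal_ineq {ν : Measure X} [IsProbabilityMeasure ν]
    {T : X → X} (hT : Measurable T) (hmp : MeasurePreserving T ν ν)
    {D : Set X} (hD : MeasurableSet D) :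
    ν {y | 2⁻¹ ≤ ecXavg T D y} ≤ 3 * ν D := by
  classical
  set h : X → ℝ := fun y => D.indicator 1 y - 3⁻¹ with hh_def
  have hh_meas : Measurable h := (measurable_one.indicator hD).sub measurable_const
  have hh_bdd : ∀ y, |h y| ≤ 2 := by
    intro y
    by_cases hy : y ∈ D <;>
      simp only [hh_def, Set.indicator_apply, hy, if_true, if_false, Pi.one_apply] <;>
      rw [abs_le] <;> constructor <;> norm_num
  have intb : ∀ (u : X → ℝ) (c : ℝ), Measurable u → (∀ y, |u y| ≤ c) → Integrable u ν :=
    fun u c hu hc => ⟨hu.aestronglyMeasurable,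
      HasFiniteIntegral.of_bounded (C := c) (ae_of_all _ hc)⟩
  set S : ℕ → X → ℝ := fun n y => ∑ k ∈ Finset.range n, h (T^[k] y) with hS_def
  have hS_meas : ∀ n, Measurable (S n) := fun n =>
    Finset.measurable_sum _ fun k _ => hh_meas.comp (hT.iterate k)
  have hS_bdd : ∀ n y, |S n y| ≤ 2 * n := by
    intro n y
    calc |S n y| ≤ ∑ k ∈ Finset.range n, |h (T^[k] y)| := Finset.abs_sum_le_sum_abs _ _
      _ ≤ ∑ k ∈ Finset.range n, 2 := Finset.sum_le_sum fun k _ => hh_bdd _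
      _ = 2 * n := by simp [mul_comm]
  have hSA : ∀ n y, S (n + 1) y = h y + S n (T y) := by
    intro n y
    show (∑ k ∈ Finset.range (n+1), h (T^[k] y)) = h y + ∑ k ∈ Finset.range n, h (T^[k] (T y))
    rw [Finset.sum_range_succ']
    simp only [Function.iterate_succ_apply, Function.iterate_zero_apply]
    exact add_comm _ _
  set M : ℕ → X → ℝ := fun N => Nat.rec (S 1) (fun n Mn y => max (Mn y) (S (n + 2) y)) N
    with hM_def
  have hM_zero : M 0 = S 1 := rfl
  have hM_succ : ∀ N y, M (N + 1) y = max (M N y) (S (N + 2) y) := fun N y => rfl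
  have hM_meas : ∀ N, Measurable (M N) := by
    intro N
    induction N with
    | zero => exact hS_meas 1
    | succ n ih => exact ih.max (hS_meas (n + 2))
  have hM_bdd : ∀ N y, |M N y| ≤ 2 * (N + 2) := by
    intro N
    induction N with
    | zero => intro y; rw [hM_zero]; exact (hS_bdd 1 y).trans (by norm_num)
    | succ n ih =>
      intro y
      rw [hM_succ]
      refine (abs_max_le_max_abs_abs).trans (max_le ?_ ?_)
      · exact (ih y).trans (by push_cast; nlinarith)
      · exact (hS_bdd (n + 2) y).trans (by push_cast; nlinarith)
  have hM_mono : ∀ N y, M N y ≤ M (N + 1) y := fun N y => le_max_left _ _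
  have hS_le_M : ∀ N n y, n ≤ N → S (n + 1) y ≤ M N y := by
    intro N
    induction N with
    | zero => intro n y hn; interval_cases n; exact le_of_eq (by rw [hM_zero])
    | succ N ih =>
      intro n y hn
      rcases Nat.lt_succ_iff_lt_or_eq.1 (Nat.lt_succ_of_le hn) with hlt | rfl
      · exact (ih n y (Nat.lt_succ_iff.1 hlt)).trans (hM_mono N y)
      · rw [hM_succ]; exact le_max_right _ _
  have hkey : ∀ N y, M N y ≤ h y + max (M N (T y)) 0 := by
    intro N
    induction N with
    | zero =>
      intro y
      rw [hM_zero, show (1 : ℕ) = 0 + 1 from rfl, hSA]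
      have : S 0 (T y) = 0 := by simp [hS_def]
      rw [this]
      gcongr
      exact le_max_right _ _
    | succ N ih =>
      intro y
      rw [hM_succ]
      refine max_le ?_ ?_
      · refine (ih y).trans ?_
        gcongr
        · exact hM_mono N (T y)
      · rw [hSA]
        gcongr
        exact le_max_of_le_left (hS_le_M (N + 1) N (T y) (Nat.le_succ N))
  set U : ℕ → Set X := fun N => {y | 0 < M N y} with hU_def
  have hU_meas : ∀ N, MeasurableSet (U N) := fun N =>
    measurableSet_lt measurable_const (hM_meas N)
  have hU_mono : Monotone U := monotone_nat_of_le_succ fun N y hy =>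
    lt_of_lt_of_le hy (hM_mono N y)
  have hh_int : Integrable h ν := intb h 2 hh_meas hh_bdd
  have hint : ∀ N, 0 ≤ ∫ y in U N, h y ∂ν := by
    intro N
    set P : X → ℝ := fun y => max (M N y) 0 with hP_def
    have hP_meas : Measurable P := (hM_meas N).max measurable_const
    have hP_bdd : ∀ y, |P y| ≤ 2 * (N + 2) := by
      intro y
      refine (abs_max_le_max_abs_abs).trans (max_le (hM_bdd N y) ?_)
      simp
      positivity
    have hP_int : Integrable P ν := intb P _ hP_meas hP_bdd
    have hPT_int : Integrable (fun y => P (T y)) ν :=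
      intb _ (2 * (N + 2)) (hP_meas.comp hT) fun y => hP_bdd (T y)
    have hPT_eq : ∫ y, P (T y) ∂ν = ∫ y, P y ∂ν := by
      have h1 : ∫ y, P y ∂(ν.map T) = ∫ y, P (T y) ∂ν :=
        integral_map hT.aemeasurable (by rw [hmp.map_eq]; exact hP_meas.aestronglyMeasurable)
      rw [hmp.map_eq] at h1
      exact h1.symm
    have step1 : ∫ y in U N, (P y - P (T y)) ∂ν ≤ ∫ y in U N, h y ∂ν := by
      refine setIntegral_mono_on ((hP_int.sub hPT_int).integrableOn) hh_int.integrableOn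
        (hU_meas N) fun y hy => ?_
      have h1 : M N y ≤ h y + max (M N (T y)) 0 := hkey N y
      have h2 : P y = M N y := max_eq_left (le_of_lt hy)
      have h3 : P (T y) = max (M N (T y)) 0 := rfl
      rw [h2, h3]
      linarith
    have step2 : ∫ y in U N, P y ∂ν = ∫ y, P y ∂ν := by
      rw [← integral_add_compl (hU_meas N) hP_int]
      have hz : ∫ y in (U N)ᶜ, P y ∂ν = ∫ y in (U N)ᶜ, (0 : ℝ) ∂ν := by
        refine setIntegral_congr_fun (hU_meas N).compl fun y hy => ?_
        have hy' : ¬(0 < M N y) := by simpa [hU_def] using hy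
        simpa [hP_def] using max_eq_right (le_of_not_gt hy')
      rw [hz]
      simp
    have step3 : ∫ y in U N, P (T y) ∂ν ≤ ∫ y, P (T y) ∂ν :=
      setIntegral_le_integral hPT_int (ae_of_all _ fun y => le_max_right _ _)
    calc (0 : ℝ) = ∫ y, P y ∂ν - ∫ y, P y ∂ν := by ring
      _ ≤ ∫ y in U N, P y ∂ν - ∫ y in U N, P (T y) ∂ν := by
          rw [step2]
          gcongr
          rw [← hPT_eq]
          exact step3
      _ = ∫ y in U N, (P y - P (T y)) ∂ν :=
          (integral_sub hP_int.integrableOn hPT_int.integrableOn).symm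
      _ ≤ _ := step1
  set Uinf : Set X := ⋃ N, U N with hUinf_def
  have hUinf_meas : MeasurableSet Uinf := MeasurableSet.iUnion hU_meas
  have hint_inf : 0 ≤ ∫ y in Uinf, h y ∂ν := by
    have ht := tendsto_setIntegral_of_monotone hU_meas hU_mono hh_int.integrableOn
    exact ge_of_tendsto ht (Eventually.of_forall hint)
  have hincl : {y | 2⁻¹ ≤ ecXavg T D y} ⊆ Uinf := by
    intro y hy
    have h13 : (3⁻¹ : ℝ≥0∞) < ecXavg T D y := lt_of_lt_of_le (by norm_num) hy
    have hfreq : ∃ᶠ N' in atTop, (3⁻¹ : ℝ≥0∞) < ecXbirk T D N' y :=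
      frequently_lt_of_lt_limsup (by isBoundedDefault) h13
    obtain ⟨N, hN3, hN1⟩ := (hfreq.and_eventually (eventually_ge_atTop 1)).exists
    set c := ((Finset.range N).filter fun n => T^[n] y ∈ D).card with hc_def
    have hsumE : (∑ n ∈ Finset.range N, D.indicator (1 : X → ℝ≥0∞) (T^[n] y))
        = (c : ℝ≥0∞) := by
      rw [hc_def, ← Finset.sum_boole]
      exact Finset.sum_congr rfl fun n _ => by
        by_cases hn : T^[n] y ∈ D <;> simp [hn]
    have hsumR : (∑ n ∈ Finset.range N, D.indicator (1 : X → ℝ) (T^[n] y)) = (c : ℝ) := by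
      rw [hc_def, ← Finset.sum_boole]
      exact Finset.sum_congr rfl fun n _ => by
        by_cases hn : T^[n] y ∈ D <;> simp [hn]
    have hNne : (N : ℝ≥0∞) ≠ 0 := by
      simpa using (by omega : N ≠ 0)
    have hlt : (3⁻¹ : ℝ≥0∞) * N < c := by
      rw [ecXbirk, hsumE] at hN3
      exact (ENNReal.lt_div_iff_mul_lt (Or.inl hNne) (Or.inl (by simp))).1 hN3
    have hltR : (N : ℝ) * 3⁻¹ < c := by
      have := ENNReal.toReal_strict_mono (by simp) hlt
      rw [ENNReal.toReal_mul] at this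
      simpa [mul_comm] using this
    have hSval : S N y = (c : ℝ) - (N : ℝ) * 3⁻¹ := by
      have h0 : S N y = ∑ k ∈ Finset.range N, (D.indicator (1 : X → ℝ) (T^[k] y) - 3⁻¹) := rfl
      rw [h0, Finset.sum_sub_distrib, hsumR, Finset.sum_const, Finset.card_range, nsmul_eq_mul]
    have hS : 0 < S N y := by rw [hSval]; linarith
    obtain ⟨m, rfl⟩ : ∃ m, N = m + 1 := ⟨N - 1, by omega⟩
    exact Set.mem_iUnion.2 ⟨m, lt_of_lt_of_le hS (hS_le_M m m y le_rfl)⟩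
  have hval : ∫ y in Uinf, h y ∂ν
      = (ν (Uinf ∩ D)).toReal - 3⁻¹ * (ν Uinf).toReal := by
    have hind_int : IntegrableOn (fun y => D.indicator (1 : X → ℝ) y) Uinf ν :=
      (intb _ 1 (measurable_one.indicator hD) fun y => by
        by_cases hy : y ∈ D <;> simp [hy]).integrableOn
    rw [show (fun y => h y) = fun y => D.indicator (1 : X → ℝ) y - 3⁻¹ from rfl]
    rw [integral_sub hind_int (integrableOn_const (measure_ne_top _ _))]
    rw [setIntegral_indicator hD]
    simp [setIntegral_const, smul_eq_mul, mul_comm]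
    rfl
  have hmain : 3⁻¹ * (ν Uinf).toReal ≤ (ν D).toReal := by
    have h1 : (ν (Uinf ∩ D)).toReal ≤ (ν D).toReal :=
      ENNReal.toReal_mono (measure_ne_top _ _) (measure_mono Set.inter_subset_right)
    rw [hval] at hint_inf
    linarith
  calc ν {y | 2⁻¹ ≤ ecXavg T D y} ≤ ν Uinf := measure_mono hincl
    _ ≤ 3 * ν D := by
      rw [← ENNReal.toReal_le_toReal (measure_ne_top _ _)
        (by simp [ENNReal.mul_ne_top, measure_ne_top])]
      rw [ENNReal.toReal_mul]
      norm_num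
      linarith

/-- Any strictly `T`-invariant set agrees, up to a `ν`-null set, with a set in the σ-algebra
generated by the sets `{y | 2⁻¹ < ecXavg T E y}` for `E` in a measure-dense family `𝔄`. -/
lemma ecX_approx_invariant {ν : Measure X} [IsProbabilityMeasure ν] {T : X → X}
    (hT : Measurable T) (hmp : MeasurePreserving T ν ν) {𝔄 : Set (Set X)}
    (h𝔄m : ∀ E ∈ 𝔄, MeasurableSet E)
    (happ : ∀ A, MeasurableSet A → ∀ ε : ℝ, 0 < ε → ∃ E ∈ 𝔄, ν (A ∆ E) < ENNReal.ofReal ε)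
    {A : Set X} (hA : MeasurableSet A) (hAinv : T ⁻¹' A = A) :
    ∃ B, MeasurableSet[generateFrom ((fun E => {y | 2⁻¹ < ecXavg T E y}) '' 𝔄)] B
      ∧ ν (A ∆ B) = 0 := by
  classical
  have happ' : ∀ k : ℕ, ∃ E ∈ 𝔄, ν (A ∆ E) < (2⁻¹ : ℝ≥0∞) ^ k / 3 := by
    intro k
    obtain ⟨E, hE, hlt⟩ := happ A hA ((2⁻¹ : ℝ) ^ k / 3) (by positivity)
    refine ⟨E, hE, hlt.trans_le (le_of_eq ?_)⟩
    rw [ENNReal.ofReal_div_of_pos (by norm_num), ENNReal.ofReal_pow (by norm_num),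
      ENNReal.ofReal_inv_of_pos (by norm_num)]
    norm_num
  choose E hEmem hEsmall using happ'
  set S : ℕ → Set X := fun k => {y | 2⁻¹ ≤ ecXavg T (E k ∆ A) y} with hS_def
  have hSmeas : ∀ k, MeasurableSet (S k) :=
    fun k => measurableSet_le measurable_const
      (ecX_measurable_avg hT ((h𝔄m _ (hEmem k)).symmDiff hA))
  have hSbound : ∀ k, ν (S k) ≤ (2⁻¹ : ℝ≥0∞) ^ k := by
    intro k
    calc ν (S k) ≤ 3 * ν (E k ∆ A) := ecX_maximal_ineq hT hmp ((h𝔄m _ (hEmem k)).symmDiff hA)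
      _ ≤ 3 * ((2⁻¹ : ℝ≥0∞) ^ k / 3) := by
          rw [symmDiff_comm]
          exact mul_le_mul_right (hEsmall k).le _
      _ = (2⁻¹ : ℝ≥0∞) ^ k := by
          rw [ENNReal.mul_div_cancel' (by norm_num) (by norm_num)]
  have hBC : ν (limsup S atTop) = 0 := by
    refine measure_limsup_atTop_eq_zero (ne_top_of_le_ne_top ?_ (ENNReal.tsum_le_tsum hSbound))
    rw [ENNReal.tsum_geometric]
    simp
  set G : Set X → Set X := fun E' => {y | 2⁻¹ < ecXavg T E' y} with hG_def
  set B : Set X := ⋃ K : ℕ, ⋂ k : ℕ, ⋂ (_ : K ≤ k), G (E k) with hB_def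
  refine ⟨B, ?_, ?_⟩
  · apply MeasurableSet.iUnion
    intro K
    apply MeasurableSet.iInter
    intro k
    apply MeasurableSet.iInter
    intro _
    exact measurableSet_generateFrom (Set.mem_image_of_mem _ (hEmem k))
  · refine measure_mono_null ?_ hBC
    intro y hy
    simp only [limsup_eq_iInf_iSup_of_nat, Set.iInf_eq_iInter, Set.iSup_eq_iUnion,
      Set.mem_iInter, Set.mem_iUnion]
    intro K
    rcases Set.mem_symmDiff.1 hy with ⟨hyA, hyB⟩ | ⟨hyB, hyA⟩
    · -- y ∈ A, y ∉ B : find k ≥ K with y ∉ G (E k), then y ∈ S k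
      have hcon : ¬ (∀ k, K ≤ k → y ∈ G (E k)) := by
        intro hcon
        exact hyB (Set.mem_iUnion.2 ⟨K, Set.mem_iInter.2 fun k =>
          Set.mem_iInter.2 fun hk => hcon k hk⟩)
      push_neg at hcon
      obtain ⟨k, hKk, hyk⟩ := hcon
      refine ⟨k, hKk, ?_⟩
      have h1 : (1 : ℝ≥0∞) ≤ ecXavg T (E k) y + ecXavg T (A ∆ E k) y := by
        have := ecXavg_tri T A (E k) y
        rwa [ecXavg_invariant hAinv, Set.indicator_of_mem hyA, Pi.one_apply] at this
      have h2 : ecXavg T (E k) y ≤ 2⁻¹ := not_lt.1 hyk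
      show (2⁻¹ : ℝ≥0∞) ≤ ecXavg T (E k ∆ A) y
      rw [symmDiff_comm]
      by_contra hcon2
      push_neg at hcon2
      have : (1 : ℝ≥0∞) < 1 := by
        calc (1 : ℝ≥0∞) ≤ ecXavg T (E k) y + ecXavg T (A ∆ E k) y := h1
          _ ≤ 2⁻¹ + ecXavg T (A ∆ E k) y := add_le_add_left h2 _
          _ < 2⁻¹ + 2⁻¹ := ENNReal.add_lt_add_left (by norm_num) hcon2
          _ = 1 := by rw [ENNReal.inv_two_add_inv_two]
      exact absurd this (lt_irrefl _)
    · -- y ∈ B, y ∉ A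
      obtain ⟨K', hK'⟩ := Set.mem_iUnion.1 hyB
      simp only [Set.mem_iInter] at hK'
      refine ⟨max K K', le_max_left _ _, ?_⟩
      have h1 : (2⁻¹ : ℝ≥0∞) < ecXavg T (E (max K K')) y := hK' _ (le_max_right _ _)
      have h2 : ecXavg T (E (max K K')) y ≤ ecXavg T (E (max K K') ∆ A) y := by
        have := ecXavg_tri T (E (max K K')) A y
        rwa [ecXavg_invariant hAinv, Set.indicator_of_notMem hyA, zero_add] at this
      exact le_of_lt (lt_of_lt_of_le h1 h2)

/-- The σ-algebra of measurable sets that agree `ν`-a.e. with a `Q`-measurable set. -/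
def ecXaeApproxSigma {X : Type*} [mX : MeasurableSpace X] (ν : Measure X)
    (Q : MeasurableSpace X) : MeasurableSpace X where
  MeasurableSet' S := MeasurableSet[mX] S ∧ ∃ S', MeasurableSet[Q] S' ∧ ν (S ∆ S') = 0
  measurableSet_empty := ⟨@MeasurableSet.empty X mX, ∅, @MeasurableSet.empty X Q, by simp⟩
  measurableSet_compl := by
    rintro S ⟨hSm, S', hS'Q, hSS'⟩
    refine ⟨MeasurableSet.compl (m := mX) hSm, S'ᶜ, MeasurableSet.compl (m := Q) hS'Q, ?_⟩
    rw [compl_symmDiff_compl]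
    exact hSS'
  measurableSet_iUnion := by
    intro Sf hSf
    choose hm S' hS' hnull using hSf
    refine ⟨@MeasurableSet.iUnion X _ mX _ _ hm, ⋃ i, S' i, @MeasurableSet.iUnion X _ Q _ _ hS', ?_⟩
    refine measure_mono_null ?_ (measure_iUnion_null hnull)
    intro y hy
    rcases Set.mem_symmDiff.1 hy with ⟨hy1, hy2⟩ | ⟨hy1, hy2⟩ <;>
      obtain ⟨i, hi⟩ := Set.mem_iUnion.1 hy1
    · exact Set.mem_iUnion.2 ⟨i, Set.mem_symmDiff.2
        (Or.inl ⟨hi, fun hc => hy2 (Set.mem_iUnion.2 ⟨i, hc⟩)⟩)⟩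
    · exact Set.mem_iUnion.2 ⟨i, Set.mem_symmDiff.2
        (Or.inr ⟨hi, fun hc => hy2 (Set.mem_iUnion.2 ⟨i, hc⟩)⟩)⟩

end BirkhoffMachinery

theorem condexp_on_ergodic_components
    {X : Type*} [mX : MeasurableSpace X] [StandardBorelSpace X]
    (μ : Measure X) [IsProbabilityMeasure μ]
    (T₁ T₂ : X ≃ᵐ X)
    (h₁ : MeasurePreserving T₁ μ μ) (h₂ : MeasurePreserving T₂ μ μ)
    (hcomm : ∀ x, T₁ (T₂ x) = T₂ (T₁ x))
    -- the ergodic decomposition `x ↦ μₓ` of `μ` under `T₁` and `T₂`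
    (μx : X → Measure X)
    (hprob : ∀ x, IsProbabilityMeasure (μx x))
    (hinv1 : ∀ x, MeasurePreserving T₁ (μx x) (μx x))
    (hinv2 : ∀ x, MeasurePreserving T₂ (μx x) (μx x))
    (herg : ∀ x, ∀ s : Set X, MeasurableSet s → T₁ ⁻¹' s = s → T₂ ⁻¹' s = s →
      μx x s = 0 ∨ μx x s = 1)
    (hmeasfam : Measurable[invSigma ⇑T₁ ⊓ invSigma ⇑T₂] μx)
    (hdecomp : ∀ g : X → ℝ, Measurable g → (∃ C : ℝ, ∀ x, |g x| ≤ C) →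
      ∀ᵐ x ∂μ, (μ[g | invSigma ⇑T₁ ⊓ invSigma ⇑T₂]) x = ∫ y, g y ∂(μx x))
    -- the function `f` and a `𝒲`-measurable representative of `E_μ(f | 𝒲)`
    (f : X → ℝ) (hf : Measurable f) (hfb : ∃ C : ℝ, ∀ x, |f x| ≤ C)
    (ftil : X → ℝ) (hftil : Measurable[invSigma ⇑T₁ ⊔ invSigma ⇑T₂] ftil)
    (hrep : ftil =ᵐ[μ] μ[f | invSigma ⇑T₁ ⊔ invSigma ⇑T₂]) :
    ∀ᵐ x ∂μ, (μx x)[f | invSigma ⇑T₁ ⊔ invSigma ⇑T₂] =ᵐ[μx x] ftil := by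
  classical
  have hm₁le : invSigma (⇑T₁) ≤ mX := fun s hs => hs.1
  have hm₂le : invSigma (⇑T₂) ≤ mX := fun s hs => hs.1
  have hWle : invSigma (⇑T₁) ⊔ invSigma (⇑T₂) ≤ mX := sup_le hm₁le hm₂le
  have hAle : invSigma (⇑T₁) ⊓ invSigma (⇑T₂) ≤ mX := le_trans inf_le_left hm₁le
  have hAW : invSigma (⇑T₁) ⊓ invSigma (⇑T₂) ≤ invSigma (⇑T₁) ⊔ invSigma (⇑T₂) :=
    le_trans inf_le_left le_sup_left
  -- boundedness set-up
  obtain ⟨C₀, hC₀⟩ := hfb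
  set C : ℝ := max C₀ 0 with hC_def
  have hC0 : 0 ≤ C := le_max_right _ _
  have hfC : ∀ y, |f y| ≤ C := fun y => (hC₀ y).trans (le_max_left _ _)
  have intbμ : ∀ {ν : Measure X} [IsFiniteMeasure ν] (u : X → ℝ) (c : ℝ),
      Measurable u → (∀ y, |u y| ≤ c) → Integrable u ν :=
    fun {ν} _ u c hu hc => ⟨hu.aestronglyMeasurable,
      HasFiniteIntegral.of_bounded (C := c) (ae_of_all _ hc)⟩
  have hf_int : Integrable f μ := intbμ f C hf hfC
  -- the truncated representative g
  set g : X → ℝ := fun y => max (min (ftil y) C) (-C) with hg_def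
  have hg_measW : Measurable[invSigma (⇑T₁) ⊔ invSigma (⇑T₂)] g :=
    (hftil.min measurable_const).max measurable_const
  have hg_meas : Measurable g := hg_measW.mono hWle le_rfl
  have hg_bdd : ∀ y, |g y| ≤ C := by
    intro y
    rw [abs_le]
    constructor
    · exact le_max_right _ _
    · exact max_le (min_le_right _ _) (by linarith)
  have hg_int : Integrable g μ := intbμ g C hg_meas hg_bdd
  have hcond_bdd : ∀ᵐ y ∂μ, |(μ[f | invSigma (⇑T₁) ⊔ invSigma (⇑T₂)]) y| ≤ C := by
    have h1 : ∀ᵐ y ∂μ, |f y| ≤ (C.toNNReal : ℝ) :=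
      ae_of_all _ fun y => by rw [Real.coe_toNNReal C hC0]; exact hfC y
    filter_upwards [ae_bdd_condExp_of_ae_bdd h1] with y hy
    rwa [Real.coe_toNNReal C hC0] at hy
  have hg_ae : g =ᵐ[μ] μ[f | invSigma (⇑T₁) ⊔ invSigma (⇑T₂)] := by
    filter_upwards [hrep, hcond_bdd] with y hy1 hy2
    have h2 := abs_le.1 hy2
    show max (min (ftil y) C) (-C) = _
    rw [hy1, min_eq_left h2.2, max_eq_left (by linarith [h2.1])]
  -- null set transfer
  have hnull : ∀ {N : Set X}, MeasurableSet N → μ N = 0 → ∀ᵐ x ∂μ, μx x N = 0 := by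
    intro N hN hNnull
    have h1 := hdecomp (N.indicator 1) (measurable_one.indicator hN)
      ⟨1, fun y => by by_cases hy : y ∈ N <;> simp [hy]⟩
    have h2 : μ[N.indicator (1 : X → ℝ) | invSigma (⇑T₁) ⊓ invSigma (⇑T₂)] =ᵐ[μ] 0 := by
      have hz : N.indicator (1 : X → ℝ) =ᵐ[μ] 0 := by
        refine (ae_iff).2 (measure_mono_null ?_ hNnull)
        intro y hy
        simp only [Set.mem_setOf_eq, Pi.zero_apply] at hy
        by_contra hyN
        exact hy (Set.indicator_of_notMem hyN _)
      calc μ[N.indicator (1 : X → ℝ) | invSigma (⇑T₁) ⊓ invSigma (⇑T₂)]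
          =ᵐ[μ] μ[(0 : X → ℝ) | invSigma (⇑T₁) ⊓ invSigma (⇑T₂)] := condExp_congr_ae hz
        _ = 0 := condExp_zero
    filter_upwards [h1, h2] with x hx1 hx2
    haveI := hprob x
    have hzz : ∫ y, N.indicator (1 : X → ℝ) y ∂(μx x) = 0 := by rw [← hx1]; exact hx2
    rw [integral_indicator hN] at hzz
    simp only [Pi.one_apply] at hzz
    rw [setIntegral_const, smul_eq_mul, mul_one] at hzz
    exact (ENNReal.toReal_eq_zero_iff _).1 hzz |>.resolve_right (measure_ne_top _ _)
  -- the test lemma, for `𝒲`-measurable sets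
  have htest : ∀ S : Set X, MeasurableSet[invSigma (⇑T₁) ⊔ invSigma (⇑T₂)] S →
      ∀ᵐ x ∂μ, ∫ y in S, (f y - g y) ∂(μx x) = 0 := by
    intro S hS
    have hSm : MeasurableSet S := hWle S hS
    set φ : X → ℝ := S.indicator (fun y => f y - g y) with hφ_def
    have hφ_meas : Measurable φ := (hf.sub hg_meas).indicator hSm
    have hφ_bdd : ∀ y, |φ y| ≤ 2 * C := by
      intro y
      by_cases hy : y ∈ S
      · rw [hφ_def, Set.indicator_of_mem hy]
        calc |f y - g y| ≤ |f y| + |g y| := abs_sub _ _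
          _ ≤ 2 * C := by linarith [hfC y, hg_bdd y]
      · rw [hφ_def, Set.indicator_of_notMem hy]
        simp
        linarith
    have h1 := hdecomp φ hφ_meas ⟨2 * C, hφ_bdd⟩
    have hsub : μ[(f - g) | invSigma (⇑T₁) ⊔ invSigma (⇑T₂)] =ᵐ[μ] 0 := by
      have ha : μ[(f - g) | invSigma (⇑T₁) ⊔ invSigma (⇑T₂)]
          =ᵐ[μ] μ[f | invSigma (⇑T₁) ⊔ invSigma (⇑T₂)]
            - μ[g | invSigma (⇑T₁) ⊔ invSigma (⇑T₂)] := condExp_sub hf_int hg_int _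
      have hb : μ[g | invSigma (⇑T₁) ⊔ invSigma (⇑T₂)] = g :=
        condExp_of_stronglyMeasurable hWle hg_measW.stronglyMeasurable hg_int
      filter_upwards [ha, hg_ae] with y hy1 hy2
      rw [hy1, Pi.sub_apply, hb, hy2, Pi.zero_apply, sub_self]
    have hφW : μ[φ | invSigma (⇑T₁) ⊔ invSigma (⇑T₂)] =ᵐ[μ] 0 := by
      have hwu : φ = (S.indicator (1 : X → ℝ)) * (f - g) := by
        funext y
        by_cases hy : y ∈ S <;> simp [hφ_def, hy]
      have hind_sm : StronglyMeasurable[invSigma (⇑T₁) ⊔ invSigma (⇑T₂)]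
          (S.indicator (1 : X → ℝ)) :=
        (@stronglyMeasurable_one X ℝ (invSigma (⇑T₁) ⊔ invSigma (⇑T₂)) _ _).indicator hS
      have hφ_int : Integrable ((S.indicator (1 : X → ℝ)) * (f - g)) μ := by
        rw [← hwu]; exact intbμ φ (2 * C) hφ_meas hφ_bdd
      have hmul := condExp_mul_of_stronglyMeasurable_left hind_sm hφ_int (hf_int.sub hg_int)
      rw [hwu]
      refine hmul.trans ?_
      filter_upwards [hsub] with y hy
      simp only [Pi.mul_apply, Pi.zero_apply, hy, mul_zero]
    have h2 : μ[φ | invSigma (⇑T₁) ⊓ invSigma (⇑T₂)] =ᵐ[μ] 0 := by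
      calc μ[φ | invSigma (⇑T₁) ⊓ invSigma (⇑T₂)]
          =ᵐ[μ] μ[μ[φ | invSigma (⇑T₁) ⊔ invSigma (⇑T₂)] | invSigma (⇑T₁) ⊓ invSigma (⇑T₂)] :=
            (condExp_condExp_of_le hAW hWle).symm
        _ =ᵐ[μ] μ[(0 : X → ℝ) | invSigma (⇑T₁) ⊓ invSigma (⇑T₂)] := condExp_congr_ae hφW
        _ = 0 := condExp_zero
    filter_upwards [h1, h2] with x hx1 hx2
    haveI := hprob x
    have hgoal : ∫ y, φ y ∂(μx x) = ∫ y in S, (f y - g y) ∂(μx x) := integral_indicator hSm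
    rw [← hgoal, ← hx1]
    exact hx2
  -- the countable measure-dense algebra of sets
  set 𝔄 : Set (Set X) := generateSetAlgebra (countableGeneratingSet X) with h𝔄_def
  have h𝔄count : 𝔄.Countable :=
    countable_generateSetAlgebra (countable_countableGeneratingSet)
  have h𝔄alg : IsSetAlgebra 𝔄 := isSetAlgebra_generateSetAlgebra
  have h𝔄gen : mX = generateFrom 𝔄 := by
    rw [h𝔄_def, generateFrom_generateSetAlgebra_eq, generateFrom_countableGeneratingSet]
  have h𝔄meas : ∀ E ∈ 𝔄, MeasurableSet E := fun E hE =>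
    h𝔄gen ▸ measurableSet_generateFrom hE
  have happν : ∀ (ν : Measure X) [IsProbabilityMeasure ν], ∀ A, MeasurableSet A →
      ∀ ε : ℝ, 0 < ε → ∃ E ∈ 𝔄, ν (A ∆ E) < ENNReal.ofReal ε := by
    intro ν _ A hA ε hε
    exact (Measure.MeasureDense.of_generateFrom_isSetAlgebra_finite ν h𝔄alg h𝔄gen).approx
      A hA (measure_ne_top ν A) ε hε
  -- generating sets for the two invariant σ-algebras
  set G₁ : Set (Set X) := (fun E => {y | 2⁻¹ < ecXavg (⇑T₁) E y}) '' 𝔄 with hG₁_def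
  set G₂ : Set (Set X) := (fun E => {y | 2⁻¹ < ecXavg (⇑T₂) E y}) '' 𝔄 with hG₂_def
  have hGprop : ∀ (T : X ≃ᵐ X) (p : Set X) (E : Set X), E ∈ 𝔄 →
      p = {y | 2⁻¹ < ecXavg (⇑T) E y} → MeasurableSet[invSigma (⇑T)] p := by
    intro T p E hE hp
    subst hp
    refine ⟨measurableSet_lt measurable_const (ecX_measurable_avg T.measurable (h𝔄meas E hE)),
      ?_⟩
    ext y
    simp only [Set.mem_preimage, Set.mem_setOf_eq, ecXavg_shift]
  have hG₁W : ∀ p ∈ G₁, MeasurableSet[invSigma (⇑T₁)] p := by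
    rintro p ⟨E, hE, rfl⟩
    exact hGprop T₁ _ E hE rfl
  have hG₂W : ∀ p ∈ G₂, MeasurableSet[invSigma (⇑T₂)] p := by
    rintro p ⟨E, hE, rfl⟩
    exact hGprop T₂ _ E hE rfl
  -- the countable π-system P
  set P : Set (Set X) := sInter '' {F : Set (Set X) | F.Finite ∧ F ⊆ G₁ ∪ G₂} with hP_def
  have hG₁count : G₁.Countable := h𝔄count.image _
  have hG₂count : G₂.Countable := h𝔄count.image _
  have hPcount : P.Countable := by
    have h1 : {F : Set (Set X) | F.Finite ∧ F ⊆ G₁ ∪ G₂}.Countable :=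
      countable_setOf_finite_subset (hG₁count.union hG₂count)
    exact h1.image _
  have hPpi : IsPiSystem P := by
    rintro s ⟨F₁, ⟨hF₁f, hF₁s⟩, rfl⟩ t ⟨F₂, ⟨hF₂f, hF₂s⟩, rfl⟩ -
    exact ⟨F₁ ∪ F₂, ⟨hF₁f.union hF₂f, Set.union_subset hF₁s hF₂s⟩, Set.sInter_union F₁ F₂⟩
  have hunivP : Set.univ ∈ P :=
    ⟨∅, ⟨Set.finite_empty, Set.empty_subset _⟩, Set.sInter_empty⟩
  have hPW : ∀ p ∈ P, MeasurableSet[invSigma (⇑T₁) ⊔ invSigma (⇑T₂)] p := by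
    rintro p ⟨F, ⟨hFfin, hFsub⟩, rfl⟩
    refine @Set.Finite.measurableSet_sInter X (invSigma (⇑T₁) ⊔ invSigma (⇑T₂)) F hFfin ?_
    intro t ht
    rcases hFsub ht with h | h
    · exact (le_sup_left : invSigma (⇑T₁) ≤ invSigma (⇑T₁) ⊔ invSigma (⇑T₂)) t (hG₁W t h)
    · exact (le_sup_right : invSigma (⇑T₂) ≤ invSigma (⇑T₁) ⊔ invSigma (⇑T₂)) t (hG₂W t h)
  have hQleW : generateFrom P ≤ invSigma (⇑T₁) ⊔ invSigma (⇑T₂) := generateFrom_le hPW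
  have hQm0 : generateFrom P ≤ mX := hQleW.trans hWle
  have hG₁P : G₁ ⊆ P := fun E' hE' =>
    ⟨{E'}, ⟨Set.finite_singleton _, by simp [hE']⟩, Set.sInter_singleton E'⟩
  have hG₂P : G₂ ⊆ P := fun E' hE' =>
    ⟨{E'}, ⟨Set.finite_singleton _, by simp [hE']⟩, Set.sInter_singleton E'⟩
  -- a.e. facts
  have hA1 : ∀ᵐ x ∂μ, ∀ p ∈ P, ∫ y in p, (f y - g y) ∂(μx x) = 0 :=
    (ae_ball_iff hPcount).2 fun p hp => htest p (hPW p hp)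
  have hA2 : ∀ᵐ x ∂μ, ftil =ᵐ[μx x] g := by
    have hfe : ftil =ᵐ[μ] g := hrep.trans hg_ae.symm
    have hNmeas : MeasurableSet {y | ¬ ftil y = g y} :=
      (measurableSet_eq_fun (hftil.mono hWle le_rfl) hg_meas).compl
    have hNnull : μ {y | ¬ ftil y = g y} = 0 := hfe
    filter_upwards [hnull hNmeas hNnull] with x hx
    exact hx
  -- conclusion, componentwise
  filter_upwards [hA1, hA2] with x hx1 hx2
  haveI := hprob x
  set ν := μx x with hν_def
  have hfg_intν : Integrable (fun y => f y - g y) ν :=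
    intbμ _ (2 * C) (hf.sub hg_meas) fun y => by
      calc |f y - g y| ≤ |f y| + |g y| := abs_sub _ _
        _ ≤ 2 * C := by linarith [hfC y, hg_bdd y]
  -- Part A: vanishing on the generated σ-algebra
  have hQzero : ∀ S : Set X, MeasurableSet[generateFrom P] S →
      ∫ y in S, (f y - g y) ∂ν = 0 := by
    have huniv : ∫ y in Set.univ, (f y - g y) ∂ν = 0 := hx1 _ hunivP
    intro S hS
    refine induction_on_inter (C := fun S _ => ∫ y in S, (f y - g y) ∂ν = 0)
      (m := generateFrom P) (s := P) rfl hPpi ?_ ?_ ?_ ?_ S hS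
    · simp
    · exact fun t ht => hx1 t ht
    · intro t htm hti
      have htm0 : MeasurableSet t := hQm0 t htm
      have := integral_add_compl htm0 hfg_intν
      rw [setIntegral_univ] at huniv
      rw [hti, zero_add] at this
      rw [this, huniv]
    · intro F hFdisj hFmeas hFint
      rw [integral_iUnion (fun i => hQm0 _ (hFmeas i)) hFdisj hfg_intν.integrableOn]
      simp [hFint]
  -- Part B: every `𝒲`-measurable set agrees a.e. with one from the generated σ-algebra
  have hWzero : ∀ S : Set X, MeasurableSet[invSigma (⇑T₁) ⊔ invSigma (⇑T₂)] S →
      ∫ y in S, (f y - g y) ∂ν = 0 := by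
    have hM' : invSigma (⇑T₁) ⊔ invSigma (⇑T₂) ≤ ecXaeApproxSigma ν (generateFrom P) := by
      refine sup_le ?_ ?_
      · intro A hA
        obtain ⟨B, hBQ, hAB⟩ := ecX_approx_invariant T₁.measurable (hinv1 x) h𝔄meas
          (happν ν) hA.1 hA.2
        exact ⟨hA.1, B, (generateFrom_mono hG₁P) _ hBQ, hAB⟩
      · intro A hA
        obtain ⟨B, hBQ, hAB⟩ := ecX_approx_invariant T₂.measurable (hinv2 x) h𝔄meas
          (happν ν) hA.1 hA.2
        exact ⟨hA.1, B, (generateFrom_mono hG₂P) _ hBQ, hAB⟩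
    intro S hS
    obtain ⟨hSm0, S', hS'Q, hnu⟩ := hM' S hS
    rw [setIntegral_congr_set (measure_symmDiff_eq_zero_iff.1 hnu)]
    exact hQzero S' hS'Q
  -- conditional expectation characterization
  have hf_intν : Integrable f ν := intbμ f C hf hfC
  have hg_intν : Integrable g ν := intbμ g C hg_meas hg_bdd
  have hcond : g =ᵐ[ν] ν[f | invSigma (⇑T₁) ⊔ invSigma (⇑T₂)] := by
    refine ae_eq_condExp_of_forall_setIntegral_eq hWle hf_intν
      (fun s _ _ => hg_intν.integrableOn) (fun s hs _ => ?_)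
      (StronglyMeasurable.aestronglyMeasurable hg_measW.stronglyMeasurable)
    have hz := hWzero s hs
    have hsub := integral_sub (hf_intν.integrableOn (s := s)) (hg_intν.integrableOn (s := s))
    rw [hsub] at hz
    linarith
  calc ν[f | invSigma (⇑T₁) ⊔ invSigma (⇑T₂)] =ᵐ[ν] g := hcond.symm
    _ =ᵐ[ν] ftil := hx2.symm
end

section
/- Let Y = {0,1,2}^ℤ with the product measure ν = τ^ℤ, where τ is the uniform probability measure on {0,1,2}, and let S be the shift (Sy)ₙ = y_{n+1}. Let X = Y × Y × Y with μ = ν × ν × ν, T₁ = S × id × S, T₂ = id × S × S. Define f : {0,1,2}³ → {0,1} by: f(0,0,0)=0, f(0,0,1)=0, f(0,0,2)=1; f(0,1,0)=0, f(0,1,1)=1, f(0,1,2)=1; f(0,2,0)=1, f(0,2,1)=1, f(0,2,2)=0; f(1,0,0)=0, f(1,0,1)=0, f(1,0,2)=1; f(1,1,0)=0, f(1,1,1)=0, f(1,1,2)=1; f(1,2,0)=1, f(1,2,1)=1, f(1,2,2)=1; f(2,0,0)=1, f(2,0,1)=1, f(2,0,2)=1; f(2,1,0)=1, f(2,1,1)=1,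 f(2,1,2)=0; f(2,2,0)=1, f(2,2,1)=0, f(2,2,2)=0. Let A = {(y,z,w) ∈ X : f(y₀, z₀, w₀) = 1}. Then μ(A) = 16/27 and, for every integer n ≠ 0, μ(A ∩ T₁ⁿA ∩ T₂ⁿA) = 145/729; in particular μ(A ∩ T₁ⁿA ∩ T₂ⁿA) < 0.96·μ(A)³ for every n ≠ 0. -/
open MeasureTheory
open scoped ENNReal

/-- The two-sided shift `(Sy)ₙ = y_{n+1}` on `{0,1,2}^ℤ`, as a measurable
equivalence. -/
def shiftE : (ℤ → Fin 3) ≃ᵐ (ℤ → Fin 3) where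
  toEquiv :=
    { toFun := fun y m => y (m + 1)
      invFun := fun y m => y (m - 1)
      left_inv := fun y => funext fun m => by simp
      right_inv := fun y => funext fun m => by simp }
  measurable_toFun := measurable_pi_lambda _ fun m => measurable_pi_apply _
  measurable_invFun := measurable_pi_lambda _ fun m => measurable_pi_apply _

/-- The function `f : {0,1,2}³ → {0,1}` given by the table in the paper. -/
def fTable : Fin 3 → Fin 3 → Fin 3 → ℕ :=
  ![![![0, 0, 1], ![0, 1, 1], ![1, 1, 0]],
    ![![0, 0, 1], ![0, 0, 1], ![1, 1, 1]],
    ![![1, 1, 1], ![1, 1, 0], ![1, 0, 0]]]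

lemma ediv_mul_ediv (p q a b : ℝ≥0∞) (ha : a ≠ 0) (ha' : a ≠ ⊤) :
    (p / a) * (q / b) = (p * q) / (a * b) := by
  rw [div_eq_mul_inv, div_eq_mul_inv, div_eq_mul_inv,
    ENNReal.mul_inv (Or.inl ha) (Or.inl ha')]
  ring

def permProdHom {α β : Type*} : Equiv.Perm α × Equiv.Perm β →* Equiv.Perm (α × β) where
  toFun p := p.1.prodCongr p.2
  map_one' := by ext x <;> rfl
  map_mul' p q := by ext x <;> rfl

lemma prodCongr_zpow {α β : Type*} (a : Equiv.Perm α) (b : Equiv.Perm β) (n : ℤ) :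
    (a.prodCongr b) ^ n = (a ^ n).prodCongr (b ^ n) := by
  have : a.prodCongr b = permProdHom (a, b) := rfl
  rw [this, ← map_zpow]
  rfl

lemma shift_zpow (n : ℤ) (y : ℤ → Fin 3) (m : ℤ) :
    (shiftE.toEquiv ^ n) y m = y (m + n) := by
  induction n using Int.induction_on generalizing y m with
  | zero => simp
  | succ k ih =>
      rw [zpow_add_one, Equiv.Perm.mul_apply]
      show (shiftE.toEquiv ^ (k:ℤ)) (fun m => y (m+1)) m = _
      rw [ih]
      congr 1; ring
  | pred k ih =>
      rw [sub_eq_add_neg, zpow_add, zpow_neg_one, Equiv.Perm.mul_apply]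
      show (shiftE.toEquiv ^ (-k:ℤ)) (fun m => y (m-1)) m = _
      rw [ih]
      congr 1; ring

theorem bernoulli_counterexample_computation
    (ν : Measure (ℤ → Fin 3)) [IsProbabilityMeasure ν]
    -- `ν` is the product measure `τ^ℤ` where `τ` is uniform on `{0,1,2}`:
    -- every cylinder set has the expected measure.
    (hcyl : ∀ (s : Finset ℤ) (a : ℤ → Fin 3),
      ν {y : ℤ → Fin 3 | ∀ i ∈ s, y i = a i} = (1 / 3 : ℝ≥0∞) ^ s.card) :
    let μ : Measure ((ℤ → Fin 3) × (ℤ → Fin 3) × (ℤ → Fin 3)) := ν.prod (ν.prod ν)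
    let T₁ := shiftE.prodCongr ((MeasurableEquiv.refl (ℤ → Fin 3)).prodCongr shiftE)
    let T₂ := (MeasurableEquiv.refl (ℤ → Fin 3)).prodCongr (shiftE.prodCongr shiftE)
    let A : Set ((ℤ → Fin 3) × (ℤ → Fin 3) × (ℤ → Fin 3)) :=
      {p | fTable (p.1 0) (p.2.1 0) (p.2.2 0) = 1}
    μ A = 16 / 27 ∧
      ∀ n : ℤ, n ≠ 0 →
        μ (A ∩ ⇑(T₁.toEquiv ^ n) '' A ∩ ⇑(T₂.toEquiv ^ n) '' A) = 145 / 729 ∧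
        μ (A ∩ ⇑(T₁.toEquiv ^ n) '' A ∩ ⇑(T₂.toEquiv ^ n) '' A) <
          (96 / 100 : ℝ≥0∞) * μ A ^ 3 := by
  intro μ T₁ T₂ A
  -- measure of one-coordinate cylinders
  have hν1 : ∀ a : Fin 3, ν {y : ℤ → Fin 3 | y 0 = a} = 1 / 3 := by
    intro a
    have h := hcyl {0} (fun _ => a)
    simpa using h
  -- measure of two-coordinate cylinders
  have hν2 : ∀ (k : ℤ), k ≠ 0 → ∀ a a' : Fin 3,
      ν {y : ℤ → Fin 3 | y 0 = a ∧ y k = a'} = 1 / 9 := by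
    intro k hk a a'
    have h := hcyl {0, k} (fun i => if i = 0 then a else a')
    have hset : {y : ℤ → Fin 3 | ∀ i ∈ ({0, k} : Finset ℤ),
        y i = (fun i => if i = 0 then a else a') i} = {y | y 0 = a ∧ y k = a'} := by
      ext y
      simp [Finset.mem_insert, hk]
    have hcard : ({0, k} : Finset ℤ).card = 2 := by
      rw [Finset.card_insert_of_notMem (by simpa using (Ne.symm hk))]
      rfl
    rw [hset, hcard] at h
    rw [h, pow_two, ediv_mul_ediv _ _ _ _ (by norm_num) (by norm_num)]
    norm_num
  -- product rectangles
  have hprod : ∀ S₁ S₂ S₃ : Set (ℤ → Fin 3),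
      μ (S₁ ×ˢ S₂ ×ˢ S₃) = ν S₁ * (ν S₂ * ν S₃) := by
    intro S₁ S₂ S₃
    show (ν.prod (ν.prod ν)) _ = _
    rw [Measure.prod_prod, Measure.prod_prod]
  have hm1 : ∀ a : Fin 3, MeasurableSet {y : ℤ → Fin 3 | y 0 = a} := by
    intro a
    have : MeasurableSet ((fun y : ℤ → Fin 3 => y 0) ⁻¹' {a}) :=
      (measurable_pi_apply 0) (measurableSet_singleton a)
    exact this
  have hm2 : ∀ (k : ℤ) (a a' : Fin 3), MeasurableSet {y : ℤ → Fin 3 | y 0 = a ∧ y k = a'} := by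
    intro k a a'
    have : MeasurableSet (((fun y : ℤ → Fin 3 => y 0) ⁻¹' {a}) ∩
        ((fun y : ℤ → Fin 3 => y k) ⁻¹' {a'})) :=
      ((measurable_pi_apply 0) (measurableSet_singleton a)).inter
        ((measurable_pi_apply k) (measurableSet_singleton a'))
    exact this
  -- Part 1 : μ A = 16/27
  have hμA : μ A = 16 / 27 := by
    classical
    set F₁ : Finset (Fin 3 × Fin 3 × Fin 3) :=
      Finset.univ.filter (fun t => fTable t.1 t.2.1 t.2.2 = 1) with hF₁
    have hA : A = ⋃ t ∈ F₁,
        ({y : ℤ → Fin 3 | y 0 = t.1} ×ˢ {y : ℤ → Fin 3 | y 0 = t.2.1} ×ˢ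
          {y : ℤ → Fin 3 | y 0 = t.2.2}) := by
      ext p
      simp only [Set.mem_iUnion, Set.mem_prod, Set.mem_setOf_eq, hF₁, Finset.mem_filter,
        Finset.mem_univ, true_and, A]
      constructor
      · intro hp; exact ⟨(p.1 0, p.2.1 0, p.2.2 0), hp, rfl, rfl, rfl⟩
      · rintro ⟨⟨a, b, c⟩, ht, h1, h2, h3⟩
        rw [h1, h2, h3]; exact ht
    have hdisj : (↑F₁ : Set (Fin 3 × Fin 3 × Fin 3)).PairwiseDisjoint
        (fun t => ({y : ℤ → Fin 3 | y 0 = t.1} ×ˢ {y : ℤ → Fin 3 | y 0 = t.2.1} ×ˢ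
          {y : ℤ → Fin 3 | y 0 = t.2.2})) := by
      intro t _ t' _ hne
      simp only [Function.onFun]
      rw [Set.disjoint_left]
      rintro ⟨y, z, w⟩ ⟨h1, h2, h3⟩ ⟨h1', h2', h3'⟩
      apply hne
      obtain ⟨a, b, c⟩ := t; obtain ⟨a', b', c'⟩ := t'
      simp_all
    rw [hA, measure_biUnion_finset hdisj (fun t _ => ((hm1 _).prod ((hm1 _).prod (hm1 _))))]
    have : ∀ t ∈ F₁, μ ({y : ℤ → Fin 3 | y 0 = t.1} ×ˢ {y : ℤ → Fin 3 | y 0 = t.2.1} ×ˢ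
        {y : ℤ → Fin 3 | y 0 = t.2.2}) = 1 / 27 := by
      intro t _
      rw [hprod, hν1, hν1, hν1,
        ediv_mul_ediv _ _ _ _ (by norm_num) (by norm_num),
        ediv_mul_ediv _ _ _ _ (by norm_num) (by norm_num)]
      norm_num
    rw [Finset.sum_congr rfl this, Finset.sum_const, nsmul_eq_mul]
    have hcard : F₁.card = 16 := by decide
    rw [hcard]
    rw [show ((16 : ℕ) : ℝ≥0∞) = 16 from by norm_num, mul_one_div]
  refine ⟨hμA, fun n hn => ?_⟩
  -- Part 2
  classical
  set m : ℤ := 0 + -n with hmdef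
  have hm0 : m ≠ 0 := by omega
  -- pointwise action of T₁ and T₂ inverses
  have hT1 : ∀ p : (ℤ → Fin 3) × (ℤ → Fin 3) × (ℤ → Fin 3),
      (T₁.toEquiv ^ (-n)) p = ((shiftE.toEquiv ^ (-n)) p.1, p.2.1, (shiftE.toEquiv ^ (-n)) p.2.2) := by
    intro p
    show ((shiftE.toEquiv.prodCongr ((Equiv.refl (ℤ → Fin 3)).prodCongr shiftE.toEquiv)) ^ (-n)) p = _
    rw [prodCongr_zpow, show (Equiv.refl (ℤ → Fin 3)) = (1 : Equiv.Perm (ℤ → Fin 3)) from rfl,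
      prodCongr_zpow, one_zpow]
    rfl
  have hT2 : ∀ p : (ℤ → Fin 3) × (ℤ → Fin 3) × (ℤ → Fin 3),
      (T₂.toEquiv ^ (-n)) p = (p.1, (shiftE.toEquiv ^ (-n)) p.2.1, (shiftE.toEquiv ^ (-n)) p.2.2) := by
    intro p
    show (((Equiv.refl (ℤ → Fin 3)).prodCongr (shiftE.toEquiv.prodCongr shiftE.toEquiv)) ^ (-n)) p = _
    rw [show (Equiv.refl (ℤ → Fin 3)) = (1 : Equiv.Perm (ℤ → Fin 3)) from rfl,
      prodCongr_zpow, prodCongr_zpow, one_zpow]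
    rfl
  have himg1 : ∀ p : (ℤ → Fin 3) × (ℤ → Fin 3) × (ℤ → Fin 3),
      p ∈ ⇑(T₁.toEquiv ^ n) '' A ↔ fTable (p.1 m) (p.2.1 0) (p.2.2 m) = 1 := by
    intro p
    rw [Equiv.image_eq_preimage_symm, Set.mem_preimage, ← Equiv.Perm.inv_def, ← zpow_neg]
    show (T₁.toEquiv ^ (-n)) p ∈ A ↔ _
    rw [hT1]
    show fTable ((shiftE.toEquiv ^ (-n)) p.1 0) (p.2.1 0) ((shiftE.toEquiv ^ (-n)) p.2.2 0) = 1 ↔ _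
    rw [shift_zpow, shift_zpow, ← hmdef]
  have himg2 : ∀ p : (ℤ → Fin 3) × (ℤ → Fin 3) × (ℤ → Fin 3),
      p ∈ ⇑(T₂.toEquiv ^ n) '' A ↔ fTable (p.1 0) (p.2.1 m) (p.2.2 m) = 1 := by
    intro p
    rw [Equiv.image_eq_preimage_symm, Set.mem_preimage, ← Equiv.Perm.inv_def, ← zpow_neg]
    show (T₂.toEquiv ^ (-n)) p ∈ A ↔ _
    rw [hT2]
    show fTable (p.1 0) ((shiftE.toEquiv ^ (-n)) p.2.1 0) ((shiftE.toEquiv ^ (-n)) p.2.2 0) = 1 ↔ _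
    rw [shift_zpow, shift_zpow, ← hmdef]
  set S : Fin 3 → Fin 3 → Set (ℤ → Fin 3) := fun a a' => {y | y 0 = a ∧ y m = a'} with hS
  set F₂ : Finset ((Fin 3 × Fin 3) × (Fin 3 × Fin 3) × (Fin 3 × Fin 3)) :=
    Finset.univ.filter (fun t => fTable t.1.1 t.2.1.1 t.2.2.1 = 1 ∧
      fTable t.1.2 t.2.1.1 t.2.2.2 = 1 ∧ fTable t.1.1 t.2.1.2 t.2.2.2 = 1) with hF₂
  have hB : A ∩ ⇑(T₁.toEquiv ^ n) '' A ∩ ⇑(T₂.toEquiv ^ n) '' A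
      = ⋃ t ∈ F₂, (S t.1.1 t.1.2 ×ˢ S t.2.1.1 t.2.1.2 ×ˢ S t.2.2.1 t.2.2.2) := by
    ext p
    simp only [Set.mem_inter_iff, himg1, himg2, Set.mem_iUnion, Set.mem_prod, hF₂,
      Finset.mem_filter, Finset.mem_univ, true_and, hS, Set.mem_setOf_eq, A]
    constructor
    · rintro ⟨⟨h1, h2⟩, h3⟩
      exact ⟨((p.1 0, p.1 m), (p.2.1 0, p.2.1 m), (p.2.2 0, p.2.2 m)),
        ⟨h1, h2, h3⟩, ⟨rfl, rfl⟩, ⟨rfl, rfl⟩, ⟨rfl, rfl⟩⟩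
    · rintro ⟨⟨⟨a, a'⟩, ⟨b, b'⟩, ⟨c, c'⟩⟩, ⟨h1, h2, h3⟩, ⟨e1, e2⟩, ⟨e3, e4⟩, ⟨e5, e6⟩⟩
      rw [e1, e2, e3, e4, e5, e6]
      exact ⟨⟨h1, h2⟩, h3⟩
  have hdisj : (↑F₂ : Set ((Fin 3 × Fin 3) × (Fin 3 × Fin 3) × (Fin 3 × Fin 3))).PairwiseDisjoint
      (fun t => (S t.1.1 t.1.2 ×ˢ S t.2.1.1 t.2.1.2 ×ˢ S t.2.2.1 t.2.2.2)) := by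
    intro t _ t' _ hne
    simp only [Function.onFun]
    rw [Set.disjoint_left]
    rintro ⟨y, z, w⟩ ⟨h1, h2, h3⟩ ⟨h1', h2', h3'⟩
    apply hne
    obtain ⟨⟨a, a'⟩, ⟨b, b'⟩, ⟨c, c'⟩⟩ := t
    obtain ⟨⟨a2, a2'⟩, ⟨b2, b2'⟩, ⟨c2, c2'⟩⟩ := t'
    simp only [hS, Set.mem_setOf_eq] at h1 h2 h3 h1' h2' h3'
    simp_all
  have hone : μ (A ∩ ⇑(T₁.toEquiv ^ n) '' A ∩ ⇑(T₂.toEquiv ^ n) '' A) = 145 / 729 := by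
    rw [hB, measure_biUnion_finset hdisj
      (fun t _ => ((hm2 m _ _).prod ((hm2 m _ _).prod (hm2 m _ _))))]
    have : ∀ t ∈ F₂, μ (S t.1.1 t.1.2 ×ˢ S t.2.1.1 t.2.1.2 ×ˢ S t.2.2.1 t.2.2.2)
        = 1 / 729 := by
      intro t _
      rw [hprod, hS]
      rw [hν2 m hm0, hν2 m hm0, hν2 m hm0,
        ediv_mul_ediv _ _ _ _ (by norm_num) (by norm_num),
        ediv_mul_ediv _ _ _ _ (by norm_num) (by norm_num)]
      norm_num
    rw [Finset.sum_congr rfl this, Finset.sum_const, nsmul_eq_mul]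
    have hcard : F₂.card = 145 := by set_option maxRecDepth 10000 in decide
    rw [hcard]
    rw [show ((145 : ℕ) : ℝ≥0∞) = 145 from by norm_num, mul_one_div]
  refine ⟨hone, ?_⟩
  rw [hone, hμA]
  -- 145/729 < 96/100 * (16/27)^3
  have hrhs : (96 / 100 : ℝ≥0∞) * (16 / 27) ^ 3 = 393216 / 1968300 := by
    rw [show ((16 : ℝ≥0∞) / 27) ^ 3 = 4096 / 19683 from by
      rw [pow_succ, pow_succ, pow_one,
        ediv_mul_ediv _ _ _ _ (by norm_num) (by norm_num),
        ediv_mul_ediv _ _ _ _ (by norm_num) (by norm_num)]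
      norm_num]
    rw [ediv_mul_ediv _ _ _ _ (by norm_num) (by norm_num)]
    norm_num
  have hlhs : (145 : ℝ≥0∞) / 729 = 391500 / 1968300 := by
    rw [show (391500 : ℝ≥0∞) = 145 * 2700 from by norm_num,
      show (1968300 : ℝ≥0∞) = 729 * 2700 from by norm_num,
      ENNReal.mul_div_mul_right _ _ (by norm_num) (by norm_num)]
  rw [hrhs, hlhs, div_eq_mul_inv, div_eq_mul_inv,
    ENNReal.mul_lt_mul_iff_left (ENNReal.inv_ne_zero.mpr (by norm_num))
      (ENNReal.inv_ne_top.mpr (by norm_num))]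
  norm_num
end

section
/- Let Y = {0,1,2}^ℤ with the product measure ν = τ^ℤ, where τ is the uniform probability measure on {0,1,2}, and let S be the shift (Sy)ₙ = y_{n+1}. Then the system (Y × Y × Y, ν × ν × ν, S × id × S, id × S × S) is ergodic: every measurable subset of Y × Y × Y invariant under both S × id × S and id × S × S has measure 0 or 1. -/
open MeasureTheory
open scoped ENNReal NNReal symmDiff

namespace BTSE

abbrev F := Fin 3
abbrev Y := ℤ → F
abbrev X := Y × Y × Y

noncomputable section
open MeasurableSpace Set

/-- shift by `k` -/
def shk (k : ℤ) (y : Y) : Y := fun m => y (m + k)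

lemma measurable_shk (k : ℤ) : Measurable (shk k) :=
  measurable_pi_lambda _ fun _ => measurable_pi_apply _

lemma shk_shk (k l : ℤ) (y : Y) : shk k (shk l y) = shk (k + l) y := by
  funext m; simp only [shk]; congr 1; ring

/-- restriction to a finite window, with shift `k` -/
def res (s : Finset ℤ) (k : ℤ) (y : Y) : s → F := fun i => y (i + k)

lemma measurable_res (s : Finset ℤ) (k : ℤ) : Measurable (res s k) :=
  measurable_pi_lambda _ fun _ => measurable_pi_apply _

variable {ν : Measure Y}

/-- base cylinder computation with shift -/
lemma cyl_shift
    (hcyl : ∀ (s : Finset ℤ) (a : ℤ → F),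
      ν {y : Y | ∀ i ∈ s, y i = a i} = (1 / 3 : ℝ≥0∞) ^ s.card)
    (s : Finset ℤ) (k : ℤ) (a : ℤ → F) :
    ν {y : Y | ∀ i ∈ s, y (i + k) = a i} = (1 / 3 : ℝ≥0∞) ^ s.card := by
  classical
  have hset : {y : Y | ∀ i ∈ s, y (i + k) = a i}
      = {y : Y | ∀ j ∈ s.image (· + k), y j = a (j - k)} := by
    ext y
    simp only [Set.mem_setOf_eq]
    constructor
    · intro h j hj
      obtain ⟨i, hi, rfl⟩ := Finset.mem_image.1 hj
      rw [show i + k - k = i by ring]; exact h i hi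
    · intro h i hi
      have := h (i + k) (Finset.mem_image.2 ⟨i, hi, rfl⟩)
      rwa [show i + k - k = i by ring] at this
  rw [hset, hcyl (s.image (· + k)) (fun j => a (j - k)),
    Finset.card_image_of_injective _ (add_left_injective k)]

/-- singleton atom for `res` -/
lemma res_atom
    (hcyl : ∀ (s : Finset ℤ) (a : ℤ → F),
      ν {y : Y | ∀ i ∈ s, y i = a i} = (1 / 3 : ℝ≥0∞) ^ s.card)
    (s : Finset ℤ) (k : ℤ) (a : s → F) :
    ν (res s k ⁻¹' {a}) = (1 / 3 : ℝ≥0∞) ^ s.card := by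
  classical
  have hset : res s k ⁻¹' {a}
      = {y : Y | ∀ i ∈ s, y (i + k) = (fun j => if h : j ∈ s then a ⟨j, h⟩ else 0) i} := by
    ext y
    simp only [Set.mem_preimage, Set.mem_singleton_iff, funext_iff, Subtype.forall,
      Set.mem_setOf_eq, res]
    refine forall₂_congr fun i hi => ?_
    rw [dif_pos hi]
  rw [hset, cyl_shift hcyl]

/-- pair atom for `res` with two disjoint shifted windows -/
lemma res_pair_atom
    (hcyl : ∀ (s : Finset ℤ) (a : ℤ → F),
      ν {y : Y | ∀ i ∈ s, y i = a i} = (1 / 3 : ℝ≥0∞) ^ s.card)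
    (s : Finset ℤ) {k k' : ℤ}
    (hd : Disjoint (s.image (· + k)) (s.image (· + k'))) (a b : s → F) :
    ν ((fun y => (res s k y, res s k' y)) ⁻¹' {(a, b)})
      = (1 / 3 : ℝ≥0∞) ^ s.card * (1 / 3 : ℝ≥0∞) ^ s.card := by
  classical
  set c : ℤ → F := fun j =>
    if j ∈ s.image (· + k) then
      (if h : j - k ∈ s then a ⟨j - k, h⟩ else 0)
    else
      (if h : j - k' ∈ s then b ⟨j - k', h⟩ else 0) with hc
  have hck : ∀ i (hi : i ∈ s), c (i + k) = a ⟨i, hi⟩ := by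
    intro i hi
    have h1 : i + k ∈ s.image (· + k) := Finset.mem_image.2 ⟨i, hi, rfl⟩
    have h2 : i + k - k ∈ s := by rwa [show i + k - k = i by ring]
    rw [hc]; simp only [h1, if_true, dif_pos h2]
    congr 1; exact Subtype.ext (by ring)
  have hck' : ∀ i (hi : i ∈ s), c (i + k') = b ⟨i, hi⟩ := by
    intro i hi
    have h1 : i + k' ∉ s.image (· + k) := fun h =>
      (Finset.disjoint_right.1 hd (Finset.mem_image.2 ⟨i, hi, rfl⟩)) h
    have h2 : i + k' - k' ∈ s := by rwa [show i + k' - k' = i by ring]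
    rw [hc]; simp only [h1, if_false, dif_pos h2]
    congr 1; exact Subtype.ext (by ring)
  have hset : (fun y => (res s k y, res s k' y)) ⁻¹' {(a, b)}
      = {y : Y | ∀ j ∈ s.image (· + k) ∪ s.image (· + k'), y j = c j} := by
    ext y
    simp only [Set.mem_preimage, Set.mem_singleton_iff, Prod.mk.injEq, funext_iff,
      Subtype.forall, Set.mem_setOf_eq, res]
    constructor
    · rintro ⟨h1, h2⟩ j hj
      rcases Finset.mem_union.1 hj with hj | hj
      · obtain ⟨i, hi, rfl⟩ := Finset.mem_image.1 hj
        rw [hck i hi]; exact h1 i hi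
      · obtain ⟨i, hi, rfl⟩ := Finset.mem_image.1 hj
        rw [hck' i hi]; exact h2 i hi
    · intro h
      constructor
      · intro i hi
        rw [← hck i hi]
        exact h (i + k) (Finset.mem_union_left _ (Finset.mem_image.2 ⟨i, hi, rfl⟩))
      · intro i hi
        rw [← hck' i hi]
        exact h (i + k') (Finset.mem_union_right _ (Finset.mem_image.2 ⟨i, hi, rfl⟩))
  rw [hset, hcyl, Finset.card_union_of_disjoint hd,
    Finset.card_image_of_injective _ (add_left_injective k),
    Finset.card_image_of_injective _ (add_left_injective k'), pow_add]

/-- the shift preserves `ν` -/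
lemma shk_preserving [IsProbabilityMeasure ν]
    (hcyl : ∀ (s : Finset ℤ) (a : ℤ → F),
      ν {y : Y | ∀ i ∈ s, y i = a i} = (1 / 3 : ℝ≥0∞) ^ s.card)
    (k : ℤ) : MeasurePreserving (shk k) ν ν := by
  classical
  refine ⟨measurable_shk k, ?_⟩
  set C : Set (Set Y) := {S | ∃ (s : Finset ℤ) (a : ℤ → F), S = {y : Y | ∀ i ∈ s, y i = a i}}
    with hC
  have hpi : IsPiSystem C := by
    rintro S ⟨s, a, rfl⟩ T ⟨t, b, rfl⟩ hne
    obtain ⟨y0, hy0s, hy0t⟩ := hne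
    refine ⟨s ∪ t, fun i => if i ∈ s then a i else b i, ?_⟩
    ext y
    simp only [Set.mem_inter_iff, Set.mem_setOf_eq]
    constructor
    · rintro ⟨h1, h2⟩ i hi
      by_cases his : i ∈ s
      · rw [if_pos his]; exact h1 i his
      · rw [if_neg his]
        exact h2 i (by rcases Finset.mem_union.1 hi with h | h; exact absurd h his; exact h)
    · intro h
      constructor
      · intro i hi
        have := h i (Finset.mem_union_left _ hi); rwa [if_pos hi] at this
      · intro i hi
        by_cases his : i ∈ s
        · have h1 := h i (Finset.mem_union_left _ his)
          rw [if_pos his] at h1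
          have e1 : y0 i = a i := hy0s i his
          have e2 : y0 i = b i := hy0t i hi
          rw [h1, ← e1, e2]
        · have := h i (Finset.mem_union_right _ hi); rwa [if_neg his] at this
  have hgen : (inferInstance : MeasurableSpace Y) = MeasurableSpace.generateFrom C := by
    refine le_antisymm ?_ (MeasurableSpace.generateFrom_le ?_)
    · rw [show (inferInstance : MeasurableSpace Y) = MeasurableSpace.pi from rfl]
      refine iSup_le fun i => ?_
      intro A hA
      rw [MeasurableSpace.measurableSet_comap] at hA
      obtain ⟨A, -, rfl⟩ := hA
      have : (fun y : Y => y i) ⁻¹' A = ⋃ v ∈ A, {y : Y | ∀ j ∈ ({i} : Finset ℤ), y j = v} := by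
        ext y
        simp only [Set.mem_preimage, Set.mem_iUnion, Set.mem_setOf_eq, Finset.mem_singleton,
          exists_prop]
        constructor
        · intro h; exact ⟨y i, h, fun j hj => by rw [hj]⟩
        · rintro ⟨v, hv, h⟩; rw [h i rfl]; exact hv
      rw [this]
      refine MeasurableSet.biUnion A.to_countable fun v _ =>
        MeasurableSpace.measurableSet_generateFrom ⟨{i}, fun _ => v, rfl⟩
    · rintro S ⟨s, a, rfl⟩
      have : {y : Y | ∀ i ∈ s, y i = a i} = ⋂ i ∈ s, (fun y : Y => y i) ⁻¹' {a i} := by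
        ext y; simp
      rw [this]
      exact MeasurableSet.biInter s.countable_toSet fun i _ =>
        (measurable_pi_apply i) (measurableSet_singleton _)
  have : IsProbabilityMeasure (ν.map (shk k)) :=
    Measure.isProbabilityMeasure_map (measurable_shk k).aemeasurable
  refine ext_of_generate_finite C hgen hpi ?_ (by simp)
  rintro S ⟨s, a, rfl⟩
  have hms : MeasurableSet {y : Y | ∀ i ∈ s, y i = a i} := by
    have : {y : Y | ∀ i ∈ s, y i = a i} = ⋂ i ∈ s, (fun y : Y => y i) ⁻¹' {a i} := by
      ext y; simp
    rw [this]
    exact MeasurableSet.biInter s.countable_toSet fun i _ =>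
      (measurable_pi_apply i) (measurableSet_singleton _)
  rw [Measure.map_apply (measurable_shk k) hms]
  have : shk k ⁻¹' {y : Y | ∀ i ∈ s, y i = a i} = {y : Y | ∀ i ∈ s, y (i + k) = a i} := rfl
  rw [this, cyl_shift hcyl, hcyl]

/-! ### the triple space -/

abbrev HT (s : Finset ℤ) := (s → F) × ((s → F) × (s → F))

def Ψ (s : Finset ℤ) (k l : ℤ) (x : X) : HT s :=
  (res s k x.1, res s k x.2.1, res s l x.2.2)

lemma measurable_Ψ (s : Finset ℤ) (k l : ℤ) : Measurable (Ψ s k l) :=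
  ((measurable_res s k).comp measurable_fst).prodMk
    (((measurable_res s k).comp (measurable_fst.comp measurable_snd)).prodMk
      ((measurable_res s l).comp (measurable_snd.comp measurable_snd)))

lemma meas_preimage_eq_sum {α H : Type*} [MeasurableSpace α] [MeasurableSpace H]
    [MeasurableSingletonClass H] (μ : Measure α) {Φ : α → H} (hΦ : Measurable Φ)
    (K : Set H) (hK : K.Finite) :
    μ (Φ ⁻¹' K) = ∑ g ∈ hK.toFinset, μ (Φ ⁻¹' {g}) := by
  classical
  have hU : Φ ⁻¹' K = ⋃ g ∈ hK.toFinset, Φ ⁻¹' {g} := by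
    ext x
    simp only [Set.mem_preimage, Set.mem_iUnion, Set.mem_singleton_iff, hK.mem_toFinset,
      exists_prop]
    exact ⟨fun h => ⟨Φ x, h, rfl⟩, fun ⟨g, hg, he⟩ => he ▸ hg⟩
  rw [hU, measure_biUnion_finset ?_ fun g _ => hΦ (measurableSet_singleton g)]
  intro g _ h _ hgh
  simp only [Function.onFun]
  refine Set.disjoint_left.2 fun x hx hx' => hgh ?_
  rw [Set.mem_preimage, Set.mem_singleton_iff] at hx hx'
  rw [← hx, ← hx']

variable [IsProbabilityMeasure ν]

lemma psi_atom
    (hcyl : ∀ (s : Finset ℤ) (a : ℤ → F),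
      ν {y : Y | ∀ i ∈ s, y i = a i} = (1 / 3 : ℝ≥0∞) ^ s.card)
    (s : Finset ℤ) (k l : ℤ) (g : HT s) :
    (ν.prod (ν.prod ν)) (Ψ s k l ⁻¹' {g}) = ((1 / 3 : ℝ≥0∞) ^ s.card) ^ 3 := by
  have hset : Ψ s k l ⁻¹' {g}
      = (res s k ⁻¹' {g.1}) ×ˢ ((res s k ⁻¹' {g.2.1}) ×ˢ (res s l ⁻¹' {g.2.2})) := by
    ext x
    simp only [Set.mem_preimage, Set.mem_singleton_iff, Prod.ext_iff, Set.mem_prod, Ψ]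
  rw [hset, Measure.prod_prod, Measure.prod_prod, res_atom hcyl, res_atom hcyl, res_atom hcyl]
  ring

lemma psi_pair_atom
    (hcyl : ∀ (s : Finset ℤ) (a : ℤ → F),
      ν {y : Y | ∀ i ∈ s, y i = a i} = (1 / 3 : ℝ≥0∞) ^ s.card)
    (s : Finset ℤ) {n m : ℤ}
    (hd1 : Disjoint (s.image (· + n)) (s.image (· + 0)))
    (hd2 : Disjoint (s.image (· + m)) (s.image (· + 0)))
    (g h : HT s) :
    (ν.prod (ν.prod ν)) ((fun x => (Ψ s n m x, Ψ s 0 0 x)) ⁻¹' {(g, h)})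
      = ((1 / 3 : ℝ≥0∞) ^ s.card) ^ 3 * ((1 / 3 : ℝ≥0∞) ^ s.card) ^ 3 := by
  have hset : (fun x : X => (Ψ s n m x, Ψ s 0 0 x)) ⁻¹' {(g, h)}
      = ((fun y => (res s n y, res s 0 y)) ⁻¹' {(g.1, h.1)}) ×ˢ
        (((fun y => (res s n y, res s 0 y)) ⁻¹' {(g.2.1, h.2.1)}) ×ˢ
          ((fun y => (res s m y, res s 0 y)) ⁻¹' {(g.2.2, h.2.2)})) := by
    ext x
    simp only [Set.mem_preimage, Set.mem_singleton_iff, Prod.ext_iff, Set.mem_prod, Ψ]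
    tauto
  rw [hset, Measure.prod_prod, Measure.prod_prod,
    res_pair_atom hcyl s hd1, res_pair_atom hcyl s hd1, res_pair_atom hcyl s hd2]
  ring

lemma psi_meas
    (hcyl : ∀ (s : Finset ℤ) (a : ℤ → F),
      ν {y : Y | ∀ i ∈ s, y i = a i} = (1 / 3 : ℝ≥0∞) ^ s.card)
    (s : Finset ℤ) (k l : ℤ) (E : Set (HT s)) :
    (ν.prod (ν.prod ν)) (Ψ s k l ⁻¹' E)
      = (E.toFinite.toFinset.card : ℝ≥0∞) * ((1 / 3 : ℝ≥0∞) ^ s.card) ^ 3 := by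
  rw [meas_preimage_eq_sum _ (measurable_Ψ s k l) E E.toFinite,
    Finset.sum_congr rfl fun g _ => psi_atom hcyl s k l g, Finset.sum_const, nsmul_eq_mul]

lemma key_mixing
    (hcyl : ∀ (s : Finset ℤ) (a : ℤ → F),
      ν {y : Y | ∀ i ∈ s, y i = a i} = (1 / 3 : ℝ≥0∞) ^ s.card)
    (s : Finset ℤ) {n m : ℤ}
    (hd1 : Disjoint (s.image (· + n)) (s.image (· + 0)))
    (hd2 : Disjoint (s.image (· + m)) (s.image (· + 0)))
    (E E' : Set (HT s)) :
    (ν.prod (ν.prod ν)) ((Ψ s n m ⁻¹' E) ∩ (Ψ s 0 0 ⁻¹' E'))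
      = (ν.prod (ν.prod ν)) (Ψ s 0 0 ⁻¹' E) * (ν.prod (ν.prod ν)) (Ψ s 0 0 ⁻¹' E') := by
  classical
  have hset : (Ψ s n m ⁻¹' E) ∩ (Ψ s 0 0 ⁻¹' E')
      = (fun x => (Ψ s n m x, Ψ s 0 0 x)) ⁻¹' (E ×ˢ E') := rfl
  have hmeas : Measurable fun x : X => (Ψ s n m x, Ψ s 0 0 x) :=
    (measurable_Ψ s n m).prodMk (measurable_Ψ s 0 0)
  rw [hset, meas_preimage_eq_sum _ hmeas _ (E.toFinite.prod E'.toFinite)]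
  have hsum : ∀ p ∈ (E.toFinite.prod E'.toFinite).toFinset,
      (ν.prod (ν.prod ν)) ((fun x => (Ψ s n m x, Ψ s 0 0 x)) ⁻¹' {p})
        = ((1 / 3 : ℝ≥0∞) ^ s.card) ^ 3 * ((1 / 3 : ℝ≥0∞) ^ s.card) ^ 3 := by
    intro p _
    have := psi_pair_atom hcyl s hd1 hd2 p.1 p.2
    simpa using this
  rw [Finset.sum_congr rfl hsum, Finset.sum_const, nsmul_eq_mul]
  have hcard : (E.toFinite.prod E'.toFinite).toFinset.card
      = E.toFinite.toFinset.card * E'.toFinite.toFinset.card := by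
    rw [← Set.Finite.toFinset_prod, Finset.card_product]
  rw [hcard, psi_meas hcyl, psi_meas hcyl]
  push_cast
  ring

/-! ### the algebra of finite-dimensional sets -/

def sIcc (N : ℕ) : Finset ℤ := Finset.Icc (-(N : ℤ)) N

def Alg : Set (Set X) :=
  {A | ∃ (N : ℕ) (E : Set (HT (sIcc N))), A = Ψ (sIcc N) 0 0 ⁻¹' E}

lemma lift_mem {N M : ℕ} (h : N ≤ M) (E : Set (HT (sIcc N))) :
    ∃ E' : Set (HT (sIcc M)), Ψ (sIcc N) 0 0 ⁻¹' E = Ψ (sIcc M) 0 0 ⁻¹' E' := by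
  have hsub : ∀ i : ℤ, i ∈ sIcc N → i ∈ sIcc M := by
    intro i hi
    simp only [sIcc, Finset.mem_Icc] at hi ⊢
    omega
  refine ⟨(fun g : HT (sIcc M) =>
    (((fun i : sIcc N => g.1 ⟨(i : ℤ), hsub i i.2⟩),
     (fun i : sIcc N => g.2.1 ⟨(i : ℤ), hsub i i.2⟩),
     (fun i : sIcc N => g.2.2 ⟨(i : ℤ), hsub i i.2⟩)) : HT (sIcc N))) ⁻¹' E, ?_⟩
  rfl

lemma isSetAlgebra_Alg : IsSetAlgebra Alg where
  empty_mem := ⟨0, ∅, by simp⟩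
  compl_mem := by
    rintro A ⟨N, E, rfl⟩
    exact ⟨N, Eᶜ, by rw [Set.preimage_compl]⟩
  union_mem := by
    rintro A B ⟨N1, E1, rfl⟩ ⟨N2, E2, rfl⟩
    obtain ⟨E1', h1⟩ := lift_mem (le_max_left N1 N2) E1
    obtain ⟨E2', h2⟩ := lift_mem (le_max_right N1 N2) E2
    exact ⟨max N1 N2, E1' ∪ E2', by rw [h1, h2, Set.preimage_union]⟩

lemma gen_Alg : (inferInstance : MeasurableSpace X) = MeasurableSpace.generateFrom Alg := by
  refine le_antisymm ?_ (MeasurableSpace.generateFrom_le ?_)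
  · have base : ∀ (pr : X → Y), (∀ (i : ℤ) (v : F), {x : X | pr x i = v} ∈ Alg) →
        MeasurableSpace.comap pr (inferInstance : MeasurableSpace Y)
          ≤ MeasurableSpace.generateFrom Alg := by
      intro pr h
      rw [show (inferInstance : MeasurableSpace Y)
          = ⨆ i : ℤ, MeasurableSpace.comap (fun y : Y => y i) inferInstance from rfl,
        MeasurableSpace.comap_iSup]
      refine iSup_le fun i => ?_
      rw [MeasurableSpace.comap_comp]
      intro A hA
      rw [MeasurableSpace.measurableSet_comap] at hA
      obtain ⟨B, -, rfl⟩ := hA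
      have : ((fun y : Y => y i) ∘ pr) ⁻¹' B = ⋃ v ∈ B, {x : X | pr x i = v} := by
        ext x
        simp only [Set.mem_preimage, Function.comp_apply, Set.mem_iUnion, Set.mem_setOf_eq,
          exists_prop]
        exact ⟨fun hb => ⟨pr x i, hb, rfl⟩, fun ⟨v, hv, he⟩ => he ▸ hv⟩
      rw [this]
      exact MeasurableSet.biUnion B.to_countable fun v _ =>
        MeasurableSpace.measurableSet_generateFrom (h i v)
    have hmk : ∀ (i : ℤ), (i : ℤ) ∈ sIcc i.natAbs := by
      intro i; simp only [sIcc, Finset.mem_Icc]; omega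
    have h1 : ∀ (i : ℤ) (v : F), {x : X | x.1 i = v} ∈ Alg := by
      intro i v
      refine ⟨i.natAbs, {g : HT (sIcc i.natAbs) | g.1 ⟨i, hmk i⟩ = v}, ?_⟩
      ext x
      simp only [Set.mem_setOf_eq, Set.mem_preimage, Ψ, res, add_zero]
    have h2 : ∀ (i : ℤ) (v : F), {x : X | x.2.1 i = v} ∈ Alg := by
      intro i v
      refine ⟨i.natAbs, {g : HT (sIcc i.natAbs) | g.2.1 ⟨i, hmk i⟩ = v}, ?_⟩
      ext x
      simp only [Set.mem_setOf_eq, Set.mem_preimage, Ψ, res, add_zero]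
    have h3 : ∀ (i : ℤ) (v : F), {x : X | x.2.2 i = v} ∈ Alg := by
      intro i v
      refine ⟨i.natAbs, {g : HT (sIcc i.natAbs) | g.2.2 ⟨i, hmk i⟩ = v}, ?_⟩
      ext x
      simp only [Set.mem_setOf_eq, Set.mem_preimage, Ψ, res, add_zero]
    rw [show (inferInstance : MeasurableSpace X)
        = MeasurableSpace.comap (fun x : X => x.1) (inferInstance : MeasurableSpace Y)
          ⊔ ((MeasurableSpace.comap (fun x : X => x.2.1) (inferInstance : MeasurableSpace Y))
            ⊔ (MeasurableSpace.comap (fun x : X => x.2.2) (inferInstance : MeasurableSpace Y)))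
        from ?_]
    · exact sup_le (base _ h1) (sup_le (base _ h2) (base _ h3))
    · rw [show (inferInstance : MeasurableSpace X)
          = MeasurableSpace.comap (Prod.fst : X → Y) inferInstance
            ⊔ MeasurableSpace.comap (Prod.snd : X → Y × Y) inferInstance from rfl,
        show (inferInstance : MeasurableSpace (Y × Y))
          = MeasurableSpace.comap (Prod.fst : Y × Y → Y) inferInstance
            ⊔ MeasurableSpace.comap (Prod.snd : Y × Y → Y) inferInstance from rfl,
        MeasurableSpace.comap_sup, MeasurableSpace.comap_comp, MeasurableSpace.comap_comp]
      rfl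
  · rintro A ⟨N, E, rfl⟩
    exact (measurable_Ψ _ _ _) E.toFinite.measurableSet

/-! ### dynamics -/

def Tn (n : ℕ) (x : X) : X := (shk n x.1, shk n x.2.1, shk (2 * (n : ℤ)) x.2.2)

lemma Tn_preserving
    (hcyl : ∀ (s : Finset ℤ) (a : ℤ → F),
      ν {y : Y | ∀ i ∈ s, y i = a i} = (1 / 3 : ℝ≥0∞) ^ s.card)
    (n : ℕ) :
    MeasurePreserving (Tn n) (ν.prod (ν.prod ν)) (ν.prod (ν.prod ν)) := by
  have h := (shk_preserving hcyl (n : ℤ)).prod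
    ((shk_preserving hcyl (n : ℤ)).prod (shk_preserving hcyl (2 * (n : ℤ))))
  exact h

lemma psi_comp_Tn (s : Finset ℤ) (n : ℕ) (E : Set (HT s)) :
    Tn n ⁻¹' (Ψ s 0 0 ⁻¹' E) = Ψ s (n : ℤ) (2 * (n : ℤ)) ⁻¹' E := by
  have hfun : ∀ (k : ℤ) (y : Y), res s 0 (shk k y) = res s k y := by
    intro k y; funext i; show y ((i : ℤ) + 0 + k) = y ((i : ℤ) + k); congr 1; ring
  have hc : ∀ x : X, Ψ s 0 0 (Tn n x) = Ψ s (n : ℤ) (2 * (n : ℤ)) x := by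
    intro x
    show (res s 0 (shk (n : ℤ) x.1), res s 0 (shk (n : ℤ) x.2.1),
        res s 0 (shk (2 * (n : ℤ)) x.2.2))
      = (res s (n : ℤ) x.1, res s (n : ℤ) x.2.1, res s (2 * (n : ℤ)) x.2.2)
    rw [hfun, hfun, hfun]
  ext x
  simp [Set.mem_preimage, hc]

lemma disj_Icc (N : ℕ) {k : ℤ} (hk : 2 * (N : ℤ) < k) :
    Disjoint ((sIcc N).image (· + k)) ((sIcc N).image (· + 0)) := by
  rw [Finset.disjoint_left]
  rintro j hj hj'
  obtain ⟨i, hi, rfl⟩ := Finset.mem_image.1 hj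
  obtain ⟨i', hi', he⟩ := Finset.mem_image.1 hj'
  simp only [sIcc, Finset.mem_Icc] at hi hi'
  omega

lemma Tn_zero : Tn 0 = id := by
  funext x
  simp only [Tn, id_eq]
  have h0 : ∀ y : Y, shk 0 y = y := fun y => funext fun m => by simp [shk]
  rw [show ((0 : ℕ) : ℤ) = 0 from rfl, show 2 * (0 : ℤ) = 0 by ring, h0, h0, h0]

lemma Tn_succ (n : ℕ) (x : X) :
    Tn (n + 1) x = Tn n ((fun x : X => (shk 1 x.1, (shk 1 x.2.1, shk 2 x.2.2))) x) := by
  simp only [Tn, shk_shk, Prod.mk.injEq]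
  have h1 : ((n : ℕ) + 1 : ℕ) = ((n : ℤ) + 1 : ℤ) := by push_cast; ring
  refine ⟨?_, ?_, ?_⟩ <;> · congr 1 <;> push_cast <;> ring

lemma meas_inter_le {α : Type*} [MeasurableSpace α] (μ : Measure α) (u v u' v' : Set α) :
    μ (u ∩ v) ≤ μ (u' ∩ v') + μ (u ∆ u') + μ (v ∆ v') := by
  have hsub : u ∩ v ⊆ (u' ∩ v') ∪ ((u ∆ u') ∪ (v ∆ v')) := by
    rintro x ⟨hu, hv⟩
    by_cases hu' : x ∈ u'
    · by_cases hv' : x ∈ v'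
      · exact Or.inl ⟨hu', hv'⟩
      · exact Or.inr (Or.inr (Set.mem_symmDiff.2 (Or.inl ⟨hv, hv'⟩)))
    · exact Or.inr (Or.inl (Set.mem_symmDiff.2 (Or.inl ⟨hu, hu'⟩)))
  calc μ (u ∩ v) ≤ μ ((u' ∩ v') ∪ ((u ∆ u') ∪ (v ∆ v'))) := measure_mono hsub
    _ ≤ μ (u' ∩ v') + μ ((u ∆ u') ∪ (v ∆ v')) := measure_union_le _ _
    _ ≤ μ (u' ∩ v') + (μ (u ∆ u') + μ (v ∆ v')) := add_le_add_right (measure_union_le _ _) _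
    _ = μ (u' ∩ v') + μ (u ∆ u') + μ (v ∆ v') := (add_assoc _ _ _).symm

lemma meas_le_add_symmDiff {α : Type*} [MeasurableSpace α] (μ : Measure α) (u v : Set α) :
    μ u ≤ μ v + μ (v ∆ u) := by
  have hsub : u ⊆ v ∪ (v ∆ u) := by
    intro x hx
    by_cases hv : x ∈ v
    · exact Or.inl hv
    · exact Or.inr (Set.mem_symmDiff.2 (Or.inr ⟨hx, hv⟩))
  exact le_trans (measure_mono hsub) (measure_union_le _ _)

end
end BTSE

theorem bernoulli_triple_system_ergodic
    (ν : Measure (ℤ → Fin 3)) [IsProbabilityMeasure ν]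
    -- `ν` is the product measure `τ^ℤ` where `τ` is uniform on `{0,1,2}`:
    -- every cylinder set has the expected measure.
    (hcyl : ∀ (s : Finset ℤ) (a : ℤ → Fin 3),
      ν {y : ℤ → Fin 3 | ∀ i ∈ s, y i = a i} = (1 / 3 : ℝ≥0∞) ^ s.card) :
    ∀ s : Set ((ℤ → Fin 3) × (ℤ → Fin 3) × (ℤ → Fin 3)), MeasurableSet s →
      ⇑(shiftE.prodCongr ((MeasurableEquiv.refl (ℤ → Fin 3)).prodCongr shiftE)) ⁻¹' s = s →
      ⇑((MeasurableEquiv.refl (ℤ → Fin 3)).prodCongr (shiftE.prodCongr shiftE)) ⁻¹' s = s →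
      (ν.prod (ν.prod ν)) s = 0 ∨ (ν.prod (ν.prod ν)) s = 1 := by
  classical
  intro s hs h1 h2
  have hT : (fun x : BTSE.X => (BTSE.shk 1 x.1, (BTSE.shk 1 x.2.1, BTSE.shk 2 x.2.2)))
      ⁻¹' s = s := by
    have he : (fun x : BTSE.X => (BTSE.shk 1 x.1, (BTSE.shk 1 x.2.1, BTSE.shk 2 x.2.2)))
        = ⇑((MeasurableEquiv.refl (ℤ → Fin 3)).prodCongr (shiftE.prodCongr shiftE))
          ∘ ⇑(shiftE.prodCongr ((MeasurableEquiv.refl (ℤ → Fin 3)).prodCongr shiftE)) := by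
      funext x
      show (BTSE.shk 1 x.1, (BTSE.shk 1 x.2.1, BTSE.shk 2 x.2.2))
        = (shiftE x.1, (shiftE x.2.1, shiftE (shiftE x.2.2)))
      have h3 : BTSE.shk 2 x.2.2 = shiftE (shiftE x.2.2) := by
        funext m
        show x.2.2 (m + 2) = x.2.2 (m + 1 + 1)
        congr 1; ring
      rw [h3]; rfl
    rw [he, Set.preimage_comp, h2, h1]
  have hTn : ∀ n : ℕ, BTSE.Tn n ⁻¹' s = s := by
    intro n
    induction n with
    | zero => rw [BTSE.Tn_zero, Set.preimage_id]
    | succ n ih =>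
      have hcomp : BTSE.Tn (n + 1)
          = BTSE.Tn n ∘ (fun x : BTSE.X => (BTSE.shk 1 x.1, (BTSE.shk 1 x.2.1, BTSE.shk 2 x.2.2))) :=
        funext fun x => BTSE.Tn_succ n x
      rw [hcomp, Set.preimage_comp, ih, hT]
  set μ := ν.prod (ν.prod ν) with hμdef
  have main : μ s = μ s * μ s := by
    have key : ∀ ε : ℝ≥0, 0 < ε → μ s ≤ μ s * μ s + ε ∧ μ s * μ s ≤ μ s + ε := by
      intro ε hε
      have hdense : μ.MeasureDense BTSE.Alg :=
        Measure.MeasureDense.of_generateFrom_isSetAlgebra_finite μ BTSE.isSetAlgebra_Alg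
          BTSE.gen_Alg
      obtain ⟨A, hmemA, hδ⟩ := hdense.approx s hs (measure_ne_top μ s) ((ε : ℝ) / 5)
        (div_pos (NNReal.coe_pos.mpr hε) (by norm_num))
      obtain ⟨N, E, rfl⟩ := hmemA
      set A : Set BTSE.X := BTSE.Ψ (BTSE.sIcc N) 0 0 ⁻¹' E with hAdef
      have hAmeas : MeasurableSet A :=
        (BTSE.measurable_Ψ (BTSE.sIcc N) 0 0) E.toFinite.measurableSet
      set δ := μ (s ∆ A) with hδdef
      set n : ℕ := 2 * N + 1 with hndef
      have hd1 : Disjoint ((BTSE.sIcc N).image (· + ((n : ℕ) : ℤ)))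
          ((BTSE.sIcc N).image (· + 0)) :=
        BTSE.disj_Icc N (by push_cast; omega)
      have hd2 : Disjoint ((BTSE.sIcc N).image (· + (2 * ((n : ℕ) : ℤ))))
          ((BTSE.sIcc N).image (· + 0)) :=
        BTSE.disj_Icc N (by push_cast; omega)
      have hmix : μ (BTSE.Tn n ⁻¹' A ∩ A) = μ A * μ A := by
        rw [hAdef, BTSE.psi_comp_Tn]
        exact BTSE.key_mixing hcyl (BTSE.sIcc N) hd1 hd2 E E
      have hpres := BTSE.Tn_preserving hcyl n
      have hsd_meas : MeasurableSet (s ∆ A) := hs.symmDiff hAmeas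
      have hpre : μ ((BTSE.Tn n ⁻¹' s) ∆ (BTSE.Tn n ⁻¹' A)) = δ := by
        rw [← Set.preimage_symmDiff]
        exact hpres.measure_preimage hsd_meas.nullMeasurableSet
      have hδe : δ ≤ ENNReal.ofReal ((ε : ℝ) / 5) := le_of_lt hδ
      have h5 : δ + δ + δ + δ + δ ≤ (ε : ℝ≥0∞) := by
        have e1 : δ + δ + δ + δ + δ = 5 * δ := by ring
        have e2 : (5 : ℝ≥0∞) * ENNReal.ofReal ((ε : ℝ) / 5)
            = ENNReal.ofReal (5 * ((ε : ℝ) / 5)) := by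
          rw [ENNReal.ofReal_mul (by norm_num : (0 : ℝ) ≤ 5), ENNReal.ofReal_ofNat]
        have e3 : 5 * ((ε : ℝ) / 5) = (ε : ℝ) := by ring
        rw [e1]
        calc 5 * δ ≤ 5 * ENNReal.ofReal ((ε : ℝ) / 5) := mul_le_mul_right hδe 5
          _ = (ε : ℝ≥0∞) := by rw [e2, e3, ENNReal.ofReal_coe_nnreal]
      have hmup : μ s ≤ μ A * μ A + (δ + δ) := by
        calc μ s = μ (BTSE.Tn n ⁻¹' s ∩ s) := by rw [hTn n, Set.inter_self]
          _ ≤ μ (BTSE.Tn n ⁻¹' A ∩ A) + μ ((BTSE.Tn n ⁻¹' s) ∆ (BTSE.Tn n ⁻¹' A)) + μ (s ∆ A) :=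
              BTSE.meas_inter_le μ _ _ _ _
          _ = μ A * μ A + (δ + δ) := by rw [hmix, hpre, ← hδdef]; ring
      have hmdown : μ A * μ A ≤ μ s + (δ + δ) := by
        have hpre' : μ ((BTSE.Tn n ⁻¹' A) ∆ (BTSE.Tn n ⁻¹' s)) = δ := by
          rw [symmDiff_comm]; exact hpre
        calc μ A * μ A = μ (BTSE.Tn n ⁻¹' A ∩ A) := hmix.symm
          _ ≤ μ (BTSE.Tn n ⁻¹' s ∩ s) + μ ((BTSE.Tn n ⁻¹' A) ∆ (BTSE.Tn n ⁻¹' s)) + μ (A ∆ s) :=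
              BTSE.meas_inter_le μ _ _ _ _
          _ = μ s + (δ + δ) := by
              rw [hpre', symmDiff_comm A s, ← hδdef, hTn n, Set.inter_self]; ring
      have hAs : μ A ≤ μ s + δ := BTSE.meas_le_add_symmDiff μ A s
      have hsA : μ s ≤ μ A + δ := by
        have h := BTSE.meas_le_add_symmDiff μ s A
        rwa [symmDiff_comm A s, ← hδdef] at h
      have hs1 : μ s ≤ 1 := prob_le_one
      have hA1 : μ A ≤ 1 := prob_le_one
      have hδ1 : δ ≤ 1 := prob_le_one
      constructor
      · calc μ s ≤ μ A * μ A + (δ + δ) := hmup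
          _ ≤ (μ s + δ) * (μ s + δ) + (δ + δ) := add_le_add_left (mul_le_mul' hAs hAs) _
          _ = μ s * μ s + (μ s * δ + δ * μ s + δ * δ + (δ + δ)) := by ring
          _ ≤ μ s * μ s + (1 * δ + δ * 1 + δ * 1 + (δ + δ)) := by
              refine add_le_add_right ?_ _
              refine add_le_add_left (add_le_add (add_le_add ?_ ?_) ?_) _
              · exact mul_le_mul' hs1 le_rfl
              · exact mul_le_mul' le_rfl hs1
              · exact mul_le_mul' le_rfl hδ1
          _ = μ s * μ s + (δ + δ + δ + δ + δ) := by ring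
          _ ≤ μ s * μ s + ε := add_le_add_right h5 _
      · calc μ s * μ s ≤ (μ A + δ) * (μ A + δ) := mul_le_mul' hsA hsA
          _ = μ A * μ A + (μ A * δ + δ * μ A + δ * δ) := by ring
          _ ≤ (μ s + (δ + δ)) + (1 * δ + δ * 1 + δ * 1) := by
              refine add_le_add hmdown ?_
              refine add_le_add (add_le_add ?_ ?_) ?_
              · exact mul_le_mul' hA1 le_rfl
              · exact mul_le_mul' le_rfl hA1
              · exact mul_le_mul' le_rfl hδ1
          _ = μ s + (δ + δ + δ + δ + δ) := by ring
          _ ≤ μ s + ε := add_le_add_right h5 _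
    refine le_antisymm ?_ ?_
    · exact ENNReal.le_of_forall_pos_le_add fun ε hε _ => (key ε hε).1
    · exact ENNReal.le_of_forall_pos_le_add fun ε hε _ => (key ε hε).2
  rcases eq_or_ne (μ s) 0 with h0 | h0
  · exact Or.inl h0
  · right
    have hfin : μ s ≠ ∞ := measure_ne_top μ s
    have hh : (μ s)⁻¹ * μ s = (μ s)⁻¹ * (μ s * μ s) := by rw [← main]
    rw [← mul_assoc, ENNReal.inv_mul_cancel h0 hfin, one_mul] at hh
    exact hh.symm
end

section
/- Let Z be a compact metrizable abelian group with Haar probability measure θ, and let α ∈ Z be such that the subgroup {nα : n ∈ ℤ} is dense in Z. Let m be a Borel probability measure on Z × Z × Z that is invariant under the two translations τ₁(z₁,z₂,z₃) = (z₁, z₂+α, z₃+α) and τ₂(z₁,z₂,z₃) = (z₁+α, z₂, z₃+α), and jointly ergodic for them (every Borel set invariant under both τ₁ and τ₂ has m-measure 0 or 1). Then there exists c ∈ Z such that m is the translate by (c, 0, 0) of the Haar probability measure of the closed subgroup H = {(z₁,z₂,z₃) ∈ Z³ : z₁ + z₂ − z₃ = 0}. -/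
open MeasureTheory

theorem ergodic_joining_is_translate_of_haar
    {Z : Type*} [TopologicalSpace Z] [CompactSpace Z]
    [TopologicalSpace.MetrizableSpace Z]
    [AddCommGroup Z] [IsTopologicalAddGroup Z]
    [MeasurableSpace Z] [BorelSpace Z]
    -- the Haar probability measure on `Z`
    (θ : Measure Z) [IsProbabilityMeasure θ]
    (hθ : ∀ z : Z, Measure.map (· + z) θ = θ)
    -- `α` generates a dense subgroup of `Z`
    (α : Z) (hdense : Dense {z : Z | ∃ n : ℤ, n • α = z})
    (m : Measure (Z × Z × Z)) [IsProbabilityMeasure m]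
    (hinv1 : Measure.map (fun p : Z × Z × Z => (p.1, p.2.1 + α, p.2.2 + α)) m = m)
    (hinv2 : Measure.map (fun p : Z × Z × Z => (p.1 + α, p.2.1, p.2.2 + α)) m = m)
    (herg : ∀ s : Set (Z × Z × Z), MeasurableSet s →
      (fun p : Z × Z × Z => (p.1, p.2.1 + α, p.2.2 + α)) ⁻¹' s = s →
      (fun p : Z × Z × Z => (p.1 + α, p.2.1, p.2.2 + α)) ⁻¹' s = s →
      m s = 0 ∨ m s = 1) :
    -- `m` is the translate by `(c, 0, 0)` of the Haar probability measure of
    -- the closed subgroup `H = {(z₁,z₂,z₃) : z₁ + z₂ - z₃ = 0}`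
    ∃ c : Z, ∃ mH : Measure (Z × Z × Z), IsProbabilityMeasure mH ∧
      mH {p : Z × Z × Z | p.1 + p.2.1 - p.2.2 = 0}ᶜ = 0 ∧
      (∀ h : Z × Z × Z, h.1 + h.2.1 - h.2.2 = 0 →
        Measure.map (· + h) mH = mH) ∧
      m = Measure.map (· + ((c, 0, 0) : Z × Z × Z)) mH := by
  classical
  haveI : SecondCountableTopology Z := by
    letI := TopologicalSpace.metrizableSpaceMetric Z
    infer_instance
  haveI : T2Space Z := by
    letI := TopologicalSpace.metrizableSpaceMetric Z
    infer_instance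
  set φ : Z × Z × Z → Z := fun p => p.1 + p.2.1 - p.2.2 with hφdef
  have hφc : Continuous φ := by fun_prop
  have hφm : Measurable φ := hφc.measurable
  set ν : Measure Z := Measure.map φ m with hνdef
  haveI : IsProbabilityMeasure ν := Measure.isProbabilityMeasure_map hφm.aemeasurable
  -- ν is {0,1}-valued
  have hν01 : ∀ B : Set Z, MeasurableSet B → ν B = 0 ∨ ν B = 1 := by
    intro B hB
    rw [hνdef, Measure.map_apply hφm hB]
    have e1 : (fun p : Z × Z × Z => (p.1, p.2.1 + α, p.2.2 + α)) ⁻¹' (φ ⁻¹' B)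
        = φ ⁻¹' B := by
      ext p
      have hp : p.1 + (p.2.1 + α) - (p.2.2 + α) = p.1 + p.2.1 - p.2.2 := by abel
      simp only [Set.mem_preimage, hφdef, hp]
    have e2 : (fun p : Z × Z × Z => (p.1 + α, p.2.1, p.2.2 + α)) ⁻¹' (φ ⁻¹' B)
        = φ ⁻¹' B := by
      ext p
      have hp : p.1 + α + p.2.1 - (p.2.2 + α) = p.1 + p.2.1 - p.2.2 := by abel
      simp only [Set.mem_preimage, hφdef, hp]
    exact herg _ (hφm hB) e1 e2
  -- there is a point all whose neighborhoods have full ν-measure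
  obtain ⟨c, hc⟩ : ∃ c : Z, ∀ U : Set Z, IsOpen U → c ∈ U → ν U = 1 := by
    by_contra hcon
    push_neg at hcon
    choose U hUo hUm hU1 using hcon
    have hU0 : ∀ z, ν (U z) = 0 := fun z =>
      ((hν01 _ (hUo z).measurableSet).resolve_right (hU1 z))
    obtain ⟨t, ht⟩ := isCompact_univ.elim_nhds_subcover U
      (fun z _ => (hUo z).mem_nhds (hUm z))
    have h0 : ν (⋃ z ∈ t, U z) = 0 :=
      (measure_biUnion_null_iff t.countable_toSet).2 fun z _ => hU0 z
    have : ν Set.univ = 0 := measure_mono_null ht.2 h0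
    simp [measure_univ] at this
  -- ν is the Dirac measure at c (in the sense that it vanishes on {c}ᶜ)
  have hsingle : ν ({c}ᶜ) = 0 := by
    letI := TopologicalSpace.metrizableSpaceMetric Z
    have hsub : ({c}ᶜ : Set Z) ⊆ ⋃ n : ℕ, (Metric.ball c (1 / (n + 1)))ᶜ := by
      intro z hz
      have hzc : z ≠ c := hz
      have hpos : 0 < dist z c := dist_pos.2 hzc
      obtain ⟨n, hn⟩ := exists_nat_one_div_lt hpos
      refine Set.mem_iUnion.2 ⟨n, ?_⟩
      simp only [Set.mem_compl_iff, Metric.mem_ball, not_lt]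
      exact hn.le
    refine measure_mono_null hsub (measure_iUnion_null fun n => ?_)
    have hb : ν (Metric.ball c (1 / (n + 1))) = 1 :=
      hc _ Metric.isOpen_ball (Metric.mem_ball_self (by positivity))
    have := measure_compl (μ := ν) (s := Metric.ball c (1 / (n + 1))) Metric.isOpen_ball.measurableSet (measure_ne_top ν _)
    rw [hb, measure_univ] at this
    simpa using this
  have hmcon : m (φ ⁻¹' {c}ᶜ) = 0 := by
    rw [← Measure.map_apply hφm (isClosed_singleton.measurableSet.compl), ← hνdef]
    exact hsingle
  -- the set of translations preserving m
  have hmeasadd : ∀ g : Z × Z × Z, Measurable (· + g) := fun g => measurable_add_const g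
  have hmapmap : ∀ a b : Z × Z × Z,
      Measure.map (· + b) (Measure.map (· + a) m) = Measure.map (· + (a + b)) m := by
    intro a b
    rw [Measure.map_map (hmeasadd b) (hmeasadd a)]
    congr 1
    funext x
    simp [Function.comp, add_assoc]
  set A : Set (Z × Z × Z) := {g | Measure.map (· + g) m = m} with hAdef
  have h0mem : (0 : Z × Z × Z) ∈ A := by
    show Measure.map (· + (0 : Z × Z × Z)) m = m
    have : (fun x : Z × Z × Z => x + 0) = id := funext fun x => add_zero x
    rw [this, Measure.map_id]
  have hA_add : ∀ a ∈ A, ∀ b ∈ A, a + b ∈ A := by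
    intro a ha b hb
    show Measure.map (· + (a + b)) m = m
    rw [← hmapmap, ha, hb]
  have hA_neg : ∀ a ∈ A, -a ∈ A := by
    intro a ha
    have h1 : Measure.map (· + (-a)) (Measure.map (· + a) m)
        = Measure.map (· + (-a)) m := by rw [ha]
    rw [hmapmap, add_neg_cancel] at h1
    have h2 : Measure.map (· + (0 : Z × Z × Z)) m = m := h0mem
    show Measure.map (· + (-a)) m = m
    rw [← h1, h2]
  have hA_zsmul : ∀ a ∈ A, ∀ n : ℤ, n • a ∈ A := by
    intro a ha n
    induction n using Int.induction_on with
    | zero => simpa using h0mem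
    | succ k ih => simpa [add_zsmul, one_zsmul] using hA_add _ ih _ ha
    | pred k ih =>
        have h' := hA_add _ ih _ (hA_neg a ha)
        have heq : (-(k : ℤ) - 1) • a = (-(k : ℤ)) • a + -a := by
          rw [sub_zsmul, one_zsmul]
        rw [heq]
        exact h'
  have ht1 : ((0 : Z), α, α) ∈ A := by
    show Measure.map (· + ((0 : Z), α, α)) m = m
    have : (fun p : Z × Z × Z => p + ((0 : Z), α, α))
        = fun p : Z × Z × Z => (p.1, p.2.1 + α, p.2.2 + α) := by
      funext p
      simp [Prod.ext_iff]
    rw [this, hinv1]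
  have ht2 : ((α : Z), 0, α) ∈ A := by
    show Measure.map (· + ((α : Z), 0, α)) m = m
    have : (fun p : Z × Z × Z => p + ((α : Z), 0, α))
        = fun p : Z × Z × Z => (p.1 + α, p.2.1, p.2.2 + α) := by
      funext p
      simp [Prod.ext_iff]
    rw [this, hinv2]
  -- A is closed
  have hA_closed : IsClosed A := by
    have hrepr : A = ⋂ f : BoundedContinuousFunction (Z × Z × Z) NNReal,
        {g : Z × Z × Z | ∫ x, (f (x + g) : ℝ) ∂m = ∫ x, (f x : ℝ) ∂m} := by
      apply Set.Subset.antisymm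
      · intro g hg
        have hg' : Measure.map (· + g) m = m := hg
        refine Set.mem_iInter.2 fun f => ?_
        have hcont : Continuous fun y : Z × Z × Z => (f y : ℝ) :=
          NNReal.continuous_coe.comp f.continuous
        have : ∫ y, (f y : ℝ) ∂(Measure.map (· + g) m) = ∫ x, (f (x + g) : ℝ) ∂m :=
          integral_map (hmeasadd g).aemeasurable hcont.aestronglyMeasurable
        rw [hg'] at this
        exact this.symm
      · intro g hg
        have hg' := Set.mem_iInter.1 hg
        show Measure.map (· + g) m = m
        haveI : IsProbabilityMeasure (Measure.map (· + g) m) :=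
          Measure.isProbabilityMeasure_map (hmeasadd g).aemeasurable
        apply ext_of_forall_lintegral_eq_of_IsFiniteMeasure
        intro f
        have hfin1 : ∫⁻ x, f x ∂(Measure.map (· + g) m) ≠ ⊤ :=
          (f.lintegral_lt_top_of_nnreal _).ne
        have hfin2 : ∫⁻ x, f x ∂m ≠ ⊤ := (f.lintegral_lt_top_of_nnreal _).ne
        rw [← ENNReal.toReal_eq_toReal_iff' hfin1 hfin2,
          BoundedContinuousFunction.toReal_lintegral_coe_eq_integral,
          BoundedContinuousFunction.toReal_lintegral_coe_eq_integral]
        have hcont : Continuous fun y : Z × Z × Z => (f y : ℝ) :=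
          NNReal.continuous_coe.comp f.continuous
        rw [integral_map (hmeasadd g).aemeasurable hcont.aestronglyMeasurable]
        exact hg' f
    rw [hrepr]
    refine isClosed_iInter fun f => isClosed_eq ?_ continuous_const
    apply continuous_of_dominated (bound := fun _ => (nndist f 0 : ℝ))
    · intro g
      exact ((NNReal.continuous_coe.comp f.continuous).comp
        (continuous_add_right g)).aestronglyMeasurable
    · intro g
      refine Filter.Eventually.of_forall fun x => ?_
      rw [Real.norm_of_nonneg (f (x + g)).coe_nonneg]
      exact_mod_cast BoundedContinuousFunction.NNReal.upper_bound f (x + g)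
    · exact integrable_const _
    · exact Filter.Eventually.of_forall fun x =>
        (NNReal.continuous_coe.comp f.continuous).comp (continuous_add_left x)
  -- every element of H preserves m
  have hH_sub : ∀ h : Z × Z × Z, h.1 + h.2.1 - h.2.2 = 0 → Measure.map (· + h) m = m := by
    intro h hh
    have h2 : h.2.2 = h.1 + h.2.1 := by
      rw [sub_eq_zero] at hh
      exact hh.symm
    set C : Set Z := {z : Z | ∃ n : ℤ, n • α = z} with hCdef
    set ψ : Z × Z → Z × Z × Z := fun q => (q.1, q.2, q.1 + q.2) with hψdef
    have hψc : Continuous ψ := by fun_prop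
    have himg : ψ '' (C ×ˢ C) ⊆ A := by
      rintro _ ⟨⟨a, b⟩, ⟨⟨k, rfl⟩, ⟨n, rfl⟩⟩, rfl⟩
      have := hA_add _ (hA_zsmul _ ht2 k) _ (hA_zsmul _ ht1 n)
      have heq : k • ((α : Z), 0, α) + n • ((0 : Z), α, α)
          = (k • α, n • α, k • α + n • α) := by
        simp [Prod.ext_iff]
      rw [heq] at this
      exact this
    have hmem : h ∈ closure (ψ '' (C ×ˢ C)) := by
      have hdp : Dense (C ×ˢ C) := hdense.prod hdense
      have h1 : h = ψ (h.1, h.2.1) := by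
        rw [hψdef]
        exact Prod.ext rfl (Prod.ext rfl h2)
      have h3 : (h.1, h.2.1) ∈ closure (C ×ˢ C) := hdp _
      rw [h1]
      exact image_closure_subset_closure_image hψc ⟨(h.1, h.2.1), h3, rfl⟩
    have : h ∈ A := by
      have := closure_mono himg hmem
      rwa [hA_closed.closure_eq] at this
    exact this
  -- assemble the answer
  refine ⟨c, Measure.map (· + ((-c, 0, 0) : Z × Z × Z)) m, ?_, ?_, ?_, ?_⟩
  · exact Measure.isProbabilityMeasure_map (hmeasadd _).aemeasurable
  · have hHm : MeasurableSet {p : Z × Z × Z | p.1 + p.2.1 - p.2.2 = 0} :=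
      hφm (isClosed_singleton (x := (0 : Z))).measurableSet
    rw [Measure.map_apply (hmeasadd _) hHm.compl]
    have : (· + ((-c, 0, 0) : Z × Z × Z)) ⁻¹' {p : Z × Z × Z | p.1 + p.2.1 - p.2.2 = 0}ᶜ
        = φ ⁻¹' {c}ᶜ := by
      ext p
      simp only [Set.mem_preimage, Set.mem_compl_iff, Set.mem_setOf_eq,
        Set.mem_singleton_iff, hφdef, Prod.fst_add, Prod.snd_add, Prod.mk_add_mk]
      constructor
      · intro hne hEq
        apply hne
        show p.1 + -c + (p.2.1 + 0) - (p.2.2 + 0) = 0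
        rw [add_zero, add_zero]
        rw [show p.1 + -c + p.2.1 - p.2.2 = p.1 + p.2.1 - p.2.2 - c by abel, hEq,
          sub_self]
      · intro hne hEq
        apply hne
        have hEq' : p.1 + -c + (p.2.1 + 0) - (p.2.2 + 0) = 0 := hEq
        rw [add_zero, add_zero] at hEq'
        have : p.1 + p.2.1 - p.2.2 - c = 0 := by
          rw [← hEq']
          abel
        rwa [sub_eq_zero] at this
    rw [this]
    exact hmcon
  · intro h hh
    have hm : Measure.map (· + h) m = m := hH_sub h hh
    calc Measure.map (· + h) (Measure.map (· + ((-c, 0, 0) : Z × Z × Z)) m)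
        = Measure.map (· + ((-c, 0, 0) + h : Z × Z × Z)) m := hmapmap _ _
      _ = Measure.map (· + (h + (-c, 0, 0) : Z × Z × Z)) m := by rw [add_comm]
      _ = Measure.map (· + ((-c, 0, 0) : Z × Z × Z)) (Measure.map (· + h) m) :=
          (hmapmap _ _).symm
      _ = Measure.map (· + ((-c, 0, 0) : Z × Z × Z)) m := by rw [hm]
  · rw [hmapmap]
    have : ((-c, 0, 0) : Z × Z × Z) + (c, 0, 0) = 0 := by
      simp [Prod.ext_iff]
    rw [this]
    exact h0mem.symm
end
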